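/- arXiv:1710.03847 — 2 statements merged into one kernel-verified Lean document; each statement's English description precedes it below -/
import Mathlib

section
/- Let S be a finite set, let 𝒜 and ℬ be two laminar families of subsets of S, and let ℓ be a positive integer. Then there exists a subset A of S such that for every P ∈ 𝒜 ∪ ℬ one has ⌊|P|/ℓ⌋ ≤ |A ∩ P| ≤ ⌈|P|/ℓ⌉. -/
set_option linter.unusedSectionVars false
set_option maxHeartbeats 1000000

namespace NashW

variable {α : Type*} [DecidableEq α]

def sid (s : Bool) (i : ℕ) : Bool := if i % 2 = 0 then s else !s

lemma sid_zero (s : Bool) : sid s 0 = s := rfl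

lemma sid_succ (s : Bool) (i : ℕ) : sid s (i + 1) = !(sid s i) := by
  unfold sid
  rcases Nat.mod_two_eq_zero_or_one i with h | h <;>
    simp [h, Nat.add_mod]

lemma sid_eq_iff (s : Bool) (i j : ℕ) : sid s i = sid s j ↔ i % 2 = j % 2 := by
  unfold sid
  rcases Nat.mod_two_eq_zero_or_one i with hi | hi <;>
    rcases Nat.mod_two_eq_zero_or_one j with hj | hj <;>
      simp [hi, hj] <;> cases s <;> simp

lemma bool_not_ne {a b : Bool} (h : ¬ a = !b) : a = b := by
  cases a <;> cases b <;> simp_all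

structure Walk (V : Finset α) (C : Bool → α → Option (Finset α))
    (f : ℕ → α) (n : ℕ) (s : Bool) : Prop where
  dom : ∀ i, i < n → f i ∈ V
  inj : ∀ i, i < n → ∀ j, j < n → f i = f j → i = j
  link : ∀ i, i + 1 < n → C (sid s i) (f i) = C (sid s i) (f (i + 1)) ∧
      (C (sid s i) (f i)).isSome
  dist : ∀ i j, i + 1 < n → j + 1 < n → sid s i = sid s j →
      C (sid s i) (f i) = C (sid s j) (f j) → i = j

def dW (f : ℕ → α) (n : ℕ) : α → ℤ :=
  fun v => ∑ i ∈ (Finset.range n).filter (fun i => f i = v), (-1 : ℤ) ^ i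

lemma dW_apply {V : Finset α} {C : Bool → α → Option (Finset α)}
    {f : ℕ → α} {n : ℕ} {s : Bool} (W : Walk V C f n s)
    {i : ℕ} (hi : i < n) : dW f n (f i) = (-1 : ℤ) ^ i := by
  unfold dW
  have : (Finset.range n).filter (fun j => f j = f i) = {i} := by
    ext j
    simp only [Finset.mem_filter, Finset.mem_range, Finset.mem_singleton]
    constructor
    · rintro ⟨hj, hfj⟩; exact W.inj j hj i hi hfj
    · rintro rfl; exact ⟨hi, rfl⟩
  rw [this, Finset.sum_singleton]

lemma dW_supp {f : ℕ → α} {n : ℕ} {v : α} (h : dW f n v ≠ 0) :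
    ∃ i, i < n ∧ f i = v := by
  by_contra hc
  push_neg at hc
  apply h
  unfold dW
  apply Finset.sum_eq_zero
  intro i hi
  simp only [Finset.mem_filter, Finset.mem_range] at hi
  exact absurd hi.2 (hc i hi.1)

lemma dW_unit {V : Finset α} {C : Bool → α → Option (Finset α)}
    {f : ℕ → α} {n : ℕ} {s : Bool} (W : Walk V C f n s) (v : α) :
    dW f n v = 0 ∨ dW f n v = 1 ∨ dW f n v = -1 := by
  by_cases h : dW f n v ≠ 0
  · obtain ⟨i, hi, rfl⟩ := dW_supp h
    rw [dW_apply W hi]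
    rcases Nat.even_or_odd i with he | ho
    · exact Or.inr (Or.inl he.neg_one_pow)
    · exact Or.inr (Or.inr ho.neg_one_pow)
  · push_neg at h
    exact Or.inl h

lemma dW_nonzero {V : Finset α} {C : Bool → α → Option (Finset α)}
    {f : ℕ → α} {n : ℕ} {s : Bool} (W : Walk V C f n s)
    {i : ℕ} (hi : i < n) : dW f n (f i) ≠ 0 := by
  rw [dW_apply W hi]
  rcases Nat.even_or_odd i with he | ho
  · rw [he.neg_one_pow]; norm_num
  · rw [ho.neg_one_pow]; norm_num

lemma charac {V : Finset α} {C : Bool → α → Option (Finset α)}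
    {f : ℕ → α} {n : ℕ} {s : Bool} (W : Walk V C f n s)
    {i : ℕ} (hi : i < n) (σ : Bool) (T : Finset α) (h : C σ (f i) = some T) :
    (∃ j, j + 1 < n ∧ sid s j = σ ∧ C σ (f j) = some T ∧ (i = j ∨ i = j + 1)) ∨
    (i = 0 ∧ σ = !s) ∨ (i = n - 1 ∧ σ = sid s (n - 1)) := by
  by_cases hσ : σ = sid s i
  · by_cases hlast : i + 1 < n
    · exact Or.inl ⟨i, hlast, hσ.symm, h, Or.inl rfl⟩
    · right; right
      have : i = n - 1 := by omega
      exact ⟨this, by rw [← this, hσ]⟩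
  · have hσ' : σ = !(sid s i) := by
      cases hb : sid s i <;> cases hb2 : σ <;> simp_all
    rcases Nat.eq_zero_or_pos i with rfl | hpos
    · right; left
      exact ⟨rfl, by rw [hσ', sid_zero]⟩
    · left
      obtain ⟨k, rfl⟩ := Nat.exists_eq_add_of_lt hpos
      simp only [Nat.zero_add] at *
      refine ⟨k, by omega, ?_, ?_, Or.inr rfl⟩
      · have := sid_succ s k
        rw [hσ', this]; simp
      · have hside : sid s k = σ := by
          have := sid_succ s k
          rw [hσ', this]; simp
        obtain ⟨heq, _⟩ := W.link k (by omega)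
        rw [hside] at heq
        rw [← heq] at h
        exact h

/-- good direction predicate -/
def GoodD (V : Finset α) (C : Bool → α → Option (Finset α)) (d : α → ℤ) : Prop :=
  (∃ v ∈ V, d v ≠ 0) ∧ (∀ v, d v ≠ 0 → v ∈ V) ∧
  (∀ v, d v = 0 ∨ d v = 1 ∨ d v = -1) ∧
  (∀ (σ : Bool) (T : Finset α),
      (V.filter (fun v => C σ v = some T ∧ d v ≠ 0)).card ≤ 2 ∧
      ∑ v ∈ V.filter (fun v => C σ v = some T ∧ d v ≠ 0), d v = 0) ∧
  (∀ σ : Bool, (V.filter (fun v => C σ v = none ∧ d v ≠ 0)).card ≤ 2 ∧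
      ((V.filter (fun v => C σ v = none ∧ d v ≠ 0)).card = 2 →
        ∑ v ∈ V.filter (fun v => C σ v = none ∧ d v ≠ 0), d v = 0))

/-- if every class member is adjacent to a σ-link of class T, the class is a balanced pair -/
lemma class_pair_of {V : Finset α} {C : Bool → α → Option (Finset α)}
    {f : ℕ → α} {n : ℕ} {s : Bool} (W : Walk V C f n s) (σ : Bool) (T : Finset α)
    (hend : ∀ i, i < n → C σ (f i) = some T →
      ∃ j, j + 1 < n ∧ sid s j = σ ∧ C σ (f j) = some T ∧ (i = j ∨ i = j + 1)) :
    (V.filter (fun v => C σ v = some T ∧ dW f n v ≠ 0)).card ≤ 2 ∧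
    ∑ v ∈ V.filter (fun v => C σ v = some T ∧ dW f n v ≠ 0), dW f n v = 0 := by
  set K := V.filter (fun v => C σ v = some T ∧ dW f n v ≠ 0) with hK
  by_cases hKe : K = ∅
  · rw [hKe]; simp
  · obtain ⟨v, hv⟩ := Finset.nonempty_iff_ne_empty.mpr hKe
    rw [hK, Finset.mem_filter] at hv
    obtain ⟨hvV, hvC, hvd⟩ := hv
    obtain ⟨i, hi, rfl⟩ := dW_supp hvd
    obtain ⟨j, hj1, hjs, hjc, _⟩ := hend i hi hvC
    have hKeq : K = {f j, f (j + 1)} := by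
      ext w
      rw [hK, Finset.mem_filter]
      constructor
      · rintro ⟨hwV, hwC, hwd⟩
        obtain ⟨i', hi', rfl⟩ := dW_supp hwd
        obtain ⟨j', hj1', hjs', hjc', hij'⟩ := hend i' hi' hwC
        have : j' = j := by
          apply W.dist j' j hj1' hj1 (by rw [hjs', hjs])
          rw [hjs', hjs, hjc', hjc]
        subst this
        simp only [Finset.mem_insert, Finset.mem_singleton]
        rcases hij' with h | h <;> [left; right] <;> rw [h]
      · intro hw
        simp only [Finset.mem_insert, Finset.mem_singleton] at hw
        have hj2 : C σ (f (j + 1)) = some T := by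
          obtain ⟨heq, _⟩ := W.link j hj1
          rw [hjs] at heq
          rw [← heq]; exact hjc
        rcases hw with rfl | rfl
        · exact ⟨W.dom j (by omega), hjc, dW_nonzero W (by omega)⟩
        · exact ⟨W.dom (j + 1) hj1, hj2, dW_nonzero W hj1⟩
    have hne : f j ≠ f (j + 1) := by
      intro h
      have := W.inj j (by omega) (j + 1) hj1 h
      omega
    rw [hKeq]
    constructor
    · exact le_of_eq (Finset.card_pair hne)
    · rw [Finset.sum_pair hne, dW_apply W (show j < n by omega), dW_apply W hj1,
        pow_succ]
      ring

/-- the terminal PATH yields a good direction -/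
lemma path_good {V : Finset α} {C : Bool → α → Option (Finset α)}
    {f : ℕ → α} {n : ℕ} {s : Bool} (W : Walk V C f n s) (hn : 1 ≤ n)
    (Hhead : C (!s) (f 0) = none) (Htail : C (sid s (n - 1)) (f (n - 1)) = none) :
    GoodD V C (dW f n) := by
  refine ⟨⟨f 0, W.dom 0 (by omega), dW_nonzero W (by omega)⟩, ?_, dW_unit W, ?_, ?_⟩
  · intro v hv
    obtain ⟨i, hi, rfl⟩ := dW_supp hv
    exact W.dom i hi
  · intro σ T
    apply class_pair_of W σ T
    intro i hi hC
    rcases charac W hi σ T hC with h | ⟨h0, hσ⟩ | ⟨h0, hσ⟩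
    · exact h
    · rw [h0, hσ] at hC
      rw [Hhead] at hC
      exact absurd hC (by simp)
    · rw [h0, hσ] at hC
      rw [Htail] at hC
      exact absurd hC (by simp)
  · intro σ
    set K := V.filter (fun v => C σ v = none ∧ dW f n v ≠ 0) with hK
    -- every element of K is f 0 or f (n-1)
    have hsub : ∀ w ∈ K, w = f 0 ∨ w = f (n - 1) := by
      intro w hw
      rw [hK, Finset.mem_filter] at hw
      obtain ⟨hwV, hwC, hwd⟩ := hw
      obtain ⟨i, hi, rfl⟩ := dW_supp hwd
      by_cases hσ : σ = sid s i
      · by_cases hlast : i + 1 < n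
        · obtain ⟨_, hsome⟩ := W.link i hlast
          rw [← hσ, hwC] at hsome
          exact absurd hsome (by simp)
        · right
          have : i = n - 1 := by omega
          rw [this]
      · have hσ' : σ = !(sid s i) := by
          cases hb : sid s i <;> cases hb2 : σ <;> simp_all
        rcases Nat.eq_zero_or_pos i with rfl | hpos
        · left; rfl
        · exfalso
          obtain ⟨k, rfl⟩ := Nat.exists_eq_add_of_lt hpos
          simp only [Nat.zero_add] at *
          have hside : sid s k = σ := by
            have := sid_succ s k
            rw [hσ', this]; simp
          obtain ⟨heq, hsome⟩ := W.link k (by omega)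
          rw [hside] at heq hsome
          rw [heq, hwC] at hsome
          exact absurd hsome (by simp)
    have hKsub : K ⊆ {f 0, f (n - 1)} := by
      intro w hw
      simp only [Finset.mem_insert, Finset.mem_singleton]
      exact hsub w hw
    constructor
    · calc K.card ≤ ({f 0, f (n - 1)} : Finset α).card := Finset.card_le_card hKsub
        _ ≤ 2 := Finset.card_insert_le _ _ |>.trans (by simp)
    · intro hcard
      -- K = {f 0, f (n-1)} with both distinct
      have hKeq : K = {f 0, f (n - 1)} := by
        apply Finset.eq_of_subset_of_card_le hKsub
        rw [hcard]
        exact Finset.card_insert_le _ _ |>.trans (by simp)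
      have hne : f 0 ≠ f (n - 1) := by
        intro h
        rw [hKeq] at hcard
        rw [h] at hcard
        simp at hcard
      have h0n : (0 : ℕ) ≠ n - 1 := fun h => hne (by rw [← h])
      have hn2 : 2 ≤ n := by omega
      -- membership facts
      have h0K : f 0 ∈ K := by rw [hKeq]; simp
      have h1K : f (n - 1) ∈ K := by rw [hKeq]; simp
      rw [hK, Finset.mem_filter] at h0K h1K
      -- σ = !s  (from f 0 ∈ K)
      have hσ0 : σ = !s := by
        by_contra hc
        have hσ : σ = sid s 0 := by
          rw [sid_zero]
          cases hb : s <;> cases hb2 : σ <;> simp_all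
        obtain ⟨_, hsome⟩ := W.link 0 (by omega)
        have hsome2 : (C σ (f 0)).isSome := by rw [hσ]; exact hsome
        rw [h0K.2.1] at hsome2
        exact absurd hsome2 (by simp)
      -- σ = sid s (n-1) (from f (n-1) ∈ K)
      have hσ1 : σ = sid s (n - 1) := by
        by_contra hc
        have hσ' : σ = !(sid s (n - 1)) := by
          cases hb : sid s (n - 1) <;> cases hb2 : σ <;> simp_all
        have hk : n - 1 = (n - 2) + 1 := by omega
        have hside : sid s (n - 2) = σ := by
          have := sid_succ s (n - 2)
          rw [hσ', hk, this]; simp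
        obtain ⟨heq, hsome⟩ := W.link (n - 2) (by omega)
        rw [hside] at heq hsome
        rw [heq, ← hk, h1K.2.1] at hsome
        exact absurd hsome (by simp)
      -- parity : n - 1 is odd
      have hpar : (n - 1) % 2 = 1 := by
        have : sid s 0 ≠ sid s (n - 1) := by
          rw [sid_zero, ← hσ1, hσ0]
          cases s <;> simp
        rw [Ne, sid_eq_iff] at this
        omega
      rw [hKeq, Finset.sum_pair hne, dW_apply W (show 0 < n by omega),
        dW_apply W (show n - 1 < n by omega)]
      have : Odd (n - 1) := Nat.odd_iff.mpr hpar
      rw [this.neg_one_pow]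
      ring

end NashW

namespace NashW

variable {α : Type*} [DecidableEq α]

/-- the terminal CYCLE yields a good direction -/
lemma cycle_good {V : Finset α} {C : Bool → α → Option (Finset α)}
    {f : ℕ → α} {n : ℕ} {s : Bool} (W : Walk V C f n s) (hn : 2 ≤ n)
    (hev : n % 2 = 0)
    (Hclose : C (!s) (f 0) = C (!s) (f (n - 1)))
    (Hsome : (C (!s) (f 0)).isSome)
    (Hcdist : ∀ i, i + 1 < n → sid s i = !s → C (sid s i) (f i) ≠ C (!s) (f 0)) :
    GoodD V C (dW f n) := by
  obtain ⟨Tc, hTc⟩ := Option.isSome_iff_exists.mp Hsome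
  have hpar : (n - 1) % 2 = 1 := by omega
  have hsid1 : sid s (n - 1) = !s := by
    unfold sid
    rw [hpar]
    simp
  refine ⟨⟨f 0, W.dom 0 (by omega), dW_nonzero W (by omega)⟩, ?_, dW_unit W, ?_, ?_⟩
  · intro v hv
    obtain ⟨i, hi, rfl⟩ := dW_supp hv
    exact W.dom i hi
  · intro σ T
    by_cases hclass : σ = !s ∧ T = Tc
    · -- the closing class: K = {f 0, f (n-1)}
      obtain ⟨rfl, hTeq⟩ := hclass
      rw [← hTeq] at hTc
      have hKeq : V.filter (fun v => C (!s) v = some T ∧ dW f n v ≠ 0)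
          = {f 0, f (n - 1)} := by
        ext w
        rw [Finset.mem_filter]
        constructor
        · rintro ⟨hwV, hwC, hwd⟩
          obtain ⟨i, hi, rfl⟩ := dW_supp hwd
          simp only [Finset.mem_insert, Finset.mem_singleton]
          by_contra hcon
          push_neg at hcon
          obtain ⟨h0, h1⟩ := hcon
          have hi0 : i ≠ 0 := fun h => h0 (by rw [h])
          have hi1 : i ≠ n - 1 := fun h => h1 (by rw [h])
          by_cases hσ : sid s i = !s
          · by_cases hlast : i + 1 < n
            · exact Hcdist i hlast hσ (by rw [hσ, hwC, hTc])
            · omega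
          · have hσ' : sid s i = s := bool_not_ne hσ
            have hk : i = (i - 1) + 1 := by omega
            have hside : sid s (i - 1) = !s := by
              have h2 := sid_succ s (i - 1)
              rw [← hk, hσ'] at h2
              calc sid s (i - 1) = !(!(sid s (i - 1))) := (Bool.not_not _).symm
                _ = !s := by rw [← h2]
            obtain ⟨heq, _⟩ := W.link (i - 1) (by omega)
            rw [hside] at heq
            rw [← hk] at heq
            exact Hcdist (i - 1) (by omega) hside (by rw [hside, heq, hwC, hTc])
        · intro hw
          simp only [Finset.mem_insert, Finset.mem_singleton] at hw
          rcases hw with rfl | rfl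
          · exact ⟨W.dom 0 (by omega), by rw [hTc], dW_nonzero W (by omega)⟩
          · exact ⟨W.dom (n - 1) (by omega), by rw [← Hclose, hTc],
              dW_nonzero W (by omega)⟩
      have hne : f 0 ≠ f (n - 1) := by
        intro h
        have := W.inj 0 (by omega) (n - 1) (by omega) h
        omega
      rw [hKeq]
      constructor
      · exact le_of_eq (Finset.card_pair hne)
      · rw [Finset.sum_pair hne, dW_apply W (show 0 < n by omega),
          dW_apply W (show n - 1 < n by omega)]
        have : Odd (n - 1) := Nat.odd_iff.mpr hpar
        rw [this.neg_one_pow]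
        ring
    · -- other classes: regular pairs
      apply class_pair_of W σ T
      intro i hi hC
      rcases charac W hi σ T hC with h | ⟨h0, hσ⟩ | ⟨h0, hσ⟩
      · exact h
      · exfalso
        rw [h0, hσ, hTc] at hC
        apply hclass
        exact ⟨hσ, by injection hC with h; exact h.symm⟩
      · exfalso
        rw [hsid1] at hσ
        rw [h0, hσ, ← Hclose, hTc] at hC
        apply hclass
        exact ⟨hσ, by injection hC with h; exact h.symm⟩
  · intro σ
    have hKe : V.filter (fun v => C σ v = none ∧ dW f n v ≠ 0) = ∅ := by
      rw [Finset.eq_empty_iff_forall_notMem]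
      intro w hw
      rw [Finset.mem_filter] at hw
      obtain ⟨hwV, hwC, hwd⟩ := hw
      obtain ⟨i, hi, rfl⟩ := dW_supp hwd
      by_cases hσ : σ = sid s i
      · by_cases hlast : i + 1 < n
        · obtain ⟨_, hsome⟩ := W.link i hlast
          have hsome2 : (C σ (f i)).isSome := by rw [hσ]; exact hsome
          rw [hwC] at hsome2
          exact absurd hsome2 (by simp)
        · have hieq : i = n - 1 := by omega
          rw [hieq] at hσ hwC
          rw [hsid1] at hσ
          rw [hσ, ← Hclose, hTc] at hwC
          exact absurd hwC (by simp)
      · have hσ' : σ = !(sid s i) := by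
          cases hb : sid s i <;> cases hb2 : σ <;> simp_all
        rcases Nat.eq_zero_or_pos i with rfl | hpos
        · rw [sid_zero] at hσ'
          rw [hσ', hTc] at hwC
          exact absurd hwC (by simp)
        · obtain ⟨k, rfl⟩ := Nat.exists_eq_add_of_lt hpos
          simp only [Nat.zero_add] at *
          have hside : sid s k = σ := by
            have := sid_succ s k
            rw [hσ', this]; simp
          obtain ⟨heq, hsome⟩ := W.link k (by omega)
          rw [hside] at heq hsome
          rw [heq, hwC] at hsome
          exact absurd hsome (by simp)
    rw [hKe]
    simp

end NashW

namespace NashW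

variable {α : Type*} [DecidableEq α]

lemma sid_shift (s : Bool) (a : ℕ) : ∀ i, sid (sid s a) i = sid s (a + i) := by
  intro i
  induction i with
  | zero => rfl
  | succ k ih => rw [← Nat.add_assoc, sid_succ, sid_succ, ih]

lemma walk_card_le {V : Finset α} {C : Bool → α → Option (Finset α)}
    {f : ℕ → α} {n : ℕ} {s : Bool} (W : Walk V C f n s) : n ≤ V.card := by
  have h := Finset.card_le_card_of_injOn f (fun i hi => W.dom i (Finset.mem_range.mp hi))
    (fun i hi j hj hij => W.inj i (Finset.mem_range.mp hi) j (Finset.mem_range.mp hj) hij)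
  simpa using h

/-- closing a cycle on a used link class -/
lemma cycle_segment (V : Finset α) (C : Bool → α → Option (Finset α))
    {f : ℕ → α} {n : ℕ} {s : Bool} {T : Finset α} (W : Walk V C f n s) (hn : 1 ≤ n)
    (hcase : C (sid s (n - 1)) (f (n - 1)) = some T)
    (j : ℕ) (hj1 : j + 1 < n) (hjs : sid s j = sid s (n - 1))
    (hjc : C (sid s j) (f j) = some T) :
    ∃ d, GoodD V C d := by
  have hpar : j % 2 = (n - 1) % 2 := (sid_eq_iff s j (n - 1)).mp hjs
  have hjn2 : j ≠ n - 2 := by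
    intro h
    rw [h] at hpar
    omega
  have hjlt : j + 2 < n := by omega
  have hm2 : 2 ≤ n - 1 - j := by omega
  have hmev : (n - 1 - j) % 2 = 0 := by omega
  have hside : ∀ i, sid (sid s (j + 1)) i = sid s (j + 1 + i) :=
    fun i => sid_shift s (j + 1) i
  have hlt : ∀ i, i < n - 1 - j → j + 1 + i < n := by omega
  have W' : Walk V C (fun i => f (j + 1 + i)) (n - 1 - j) (sid s (j + 1)) := by
    refine ⟨?_, ?_, ?_, ?_⟩
    · intro i hi
      exact W.dom _ (hlt i hi)
    · intro i hi i' hi' hgi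
      have := W.inj _ (hlt i hi) _ (hlt i' hi') hgi
      omega
    · intro i hi
      show C (sid (sid s (j + 1)) i) (f (j + 1 + i)) =
          C (sid (sid s (j + 1)) i) (f (j + 1 + (i + 1))) ∧ _
      rw [hside i]
      have harith : j + 1 + (i + 1) = (j + 1 + i) + 1 := by omega
      rw [harith]
      exact W.link (j + 1 + i) (by omega)
    · intro i i' hi hi' hss hcc
      rw [hside i, hside i'] at hss
      have hcc' : C (sid s (j + 1 + i)) (f (j + 1 + i))
          = C (sid s (j + 1 + i')) (f (j + 1 + i')) := by
        have e1 : C (sid (sid s (j+1)) i) ((fun i => f (j + 1 + i)) i)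
            = C (sid s (j + 1 + i)) (f (j + 1 + i)) := by rw [hside i]
        have e2 : C (sid (sid s (j+1)) i') ((fun i => f (j + 1 + i)) i')
            = C (sid s (j + 1 + i')) (f (j + 1 + i')) := by rw [hside i']
        rw [← e1, ← e2]
        exact hcc
      have := W.dist (j + 1 + i) (j + 1 + i') (by omega) (by omega) hss hcc'
      omega
  have hnots' : (!(sid s (j + 1))) = sid s j := by
    rw [sid_succ, Bool.not_not]
  have hg0 : C (!(sid s (j + 1))) ((fun i => f (j + 1 + i)) 0) = some T := by
    show C (!(sid s (j + 1))) (f (j + 1 + 0)) = some T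
    rw [hnots']
    have h0 : j + 1 + 0 = j + 1 := by omega
    rw [h0]
    obtain ⟨heq, _⟩ := W.link j hj1
    rw [← heq]
    exact hjc
  have hgm : C (!(sid s (j + 1))) ((fun i => f (j + 1 + i)) (n - 1 - j - 1)) = some T := by
    show C (!(sid s (j + 1))) (f (j + 1 + (n - 1 - j - 1))) = some T
    rw [hnots']
    have h0 : j + 1 + (n - 1 - j - 1) = n - 1 := by omega
    rw [h0, hjs]
    exact hcase
  have hgm' : C (!(sid s (j + 1))) ((fun i => f (j + 1 + i)) ((n - 1 - j) - 1)) = some T := hgm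
  refine ⟨dW (fun i => f (j + 1 + i)) (n - 1 - j),
    cycle_good W' hm2 hmev (by rw [hg0, hgm']) (by rw [hg0]; simp) ?_⟩
  intro i hi hsi
  rw [hg0, hside i]
  show C (sid s (j + 1 + i)) (f (j + 1 + i)) ≠ some T
  intro hcc
  have hss : sid s (j + 1 + i) = sid s j := by
    rw [← hside i, hsi, hnots']
  have hclass : C (sid s (j + 1 + i)) (f (j + 1 + i)) = C (sid s j) (f j) := by
    rw [hcc, hjc]
  have := W.dist (j + 1 + i) j (by omega) hj1 hss hclass
  omega

/-- a fresh partner is not on the walk (given verified head) -/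
lemma fresh (V : Finset α) (C : Bool → α → Option (Finset α))
    {f : ℕ → α} {n : ℕ} {s : Bool} {T : Finset α} (W : Walk V C f n s) (hn : 1 ≤ n)
    (Hhead : C (!s) (f 0) = none)
    (hcase : C (sid s (n - 1)) (f (n - 1)) = some T)
    (hused : ∀ j, j + 1 < n → sid s j = sid s (n - 1) → C (sid s j) (f j) ≠ some T)
    (w : α) (hwne : w ≠ f (n - 1)) (hwc : C (sid s (n - 1)) w = some T) :
    ∀ i, i < n → f i ≠ w := by
  intro i hi hfi
  rw [← hfi] at hwc hwne
  rcases charac W hi (sid s (n - 1)) T hwc with ⟨j, hj1, hjs, hjc, _⟩ | ⟨h0, hσ⟩ | ⟨h0, hσ⟩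
  · exact hused j hj1 hjs (by rw [hjs]; exact hjc)
  · rw [h0, hσ] at hwc
    rw [Hhead] at hwc
    exact absurd hwc (by simp)
  · rw [h0] at hwne
    exact hwne rfl

/-- extending the walk by a fresh partner -/
lemma extend (V : Finset α) (C : Bool → α → Option (Finset α))
    {f : ℕ → α} {n : ℕ} {s : Bool} {T : Finset α} (W : Walk V C f n s) (hn : 1 ≤ n)
    (hcase : C (sid s (n - 1)) (f (n - 1)) = some T)
    (hused : ∀ j, j + 1 < n → sid s j = sid s (n - 1) → C (sid s j) (f j) ≠ some T)
    (w : α) (hwV : w ∈ V) (hwc : C (sid s (n - 1)) w = some T)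
    (hwfresh : ∀ i, i < n → f i ≠ w) :
    Walk V C (fun i => if i = n then w else f i) (n + 1) s ∧
      (fun i => if i = n then w else f i) 0 = f 0 := by
  constructor
  · refine ⟨?_, ?_, ?_, ?_⟩
    · intro i hi
      by_cases h : i = n
      · simp [h, hwV]
      · have : i < n := by omega
        simp [h, W.dom i this]
    · intro i hi j hj hij
      by_cases h1 : i = n <;> by_cases h2 : j = n
      · omega
      · exfalso
        simp only [h1, if_pos rfl, if_neg h2] at hij
        exact hwfresh j (by omega) hij.symm
      · exfalso
        simp only [h2, if_pos rfl, if_neg h1] at hij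
        exact hwfresh i (by omega) hij
      · simp only [if_neg h1, if_neg h2] at hij
        exact W.inj i (by omega) j (by omega) hij
    · intro i hi
      by_cases h : i + 1 = n
      · -- the new link : i = n - 1
        have hieq : i = n - 1 := by omega
        have hine : ¬ (i = n) := by omega
        simp only [if_neg hine, if_pos h]
        rw [hieq, hcase, hwc]
        simp
      · have hin : i + 1 < n := by omega
        have h1 : ¬ (i = n) := by omega
        have h2 : ¬ (i + 1 = n) := h
        simp only [if_neg h1, if_neg h2]
        exact W.link i hin
    · intro i j hi hj hss hcc
      by_cases h1 : i + 1 < n <;> by_cases h2 : j + 1 < n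
      · have e1 : ¬ (i = n) := by omega
        have e2 : ¬ (j = n) := by omega
        simp only [if_neg e1, if_neg e2] at hcc
        exact W.dist i j h1 h2 hss hcc
      · -- j = n - 1 : new link, i old link with same class : contradiction
        exfalso
        have hjeq : j = n - 1 := by omega
        have e1 : ¬ (i = n) := by omega
        have e2 : ¬ (j = n) := by omega
        simp only [if_neg e1, if_neg e2] at hcc
        rw [hjeq] at hss hcc
        exact hused i h1 hss (hcc.trans hcase)
      · exfalso
        have hieq : i = n - 1 := by omega
        have e1 : ¬ (i = n) := by omega
        have e2 : ¬ (j = n) := by omega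
        simp only [if_neg e1, if_neg e2] at hcc
        rw [hieq] at hss hcc
        exact hused j h2 hss.symm (hcc.symm.trans hcase)
      · omega
  · have : ¬ ((0:ℕ) = n) := by omega
    simp [this]

end NashW

namespace NashW

variable {α : Type*} [DecidableEq α]

/-- fresh partner not on walk, unverified head, head distinct -/
lemma fresh1 (V : Finset α) (C : Bool → α → Option (Finset α))
    {f : ℕ → α} {n : ℕ} {s : Bool} {T : Finset α} (W : Walk V C f n s) (hn : 1 ≤ n)
    (hcase : C (sid s (n - 1)) (f (n - 1)) = some T)
    (hused : ∀ j, j + 1 < n → sid s j = sid s (n - 1) → C (sid s j) (f j) ≠ some T)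
    (w : α) (hwne : w ≠ f (n - 1)) (hwc : C (sid s (n - 1)) w = some T)
    (hw0 : ¬ f 0 = w) :
    ∀ i, i < n → f i ≠ w := by
  intro i hi hfi
  rw [← hfi] at hwc hwne
  rcases charac W hi (sid s (n - 1)) T hwc with ⟨j, hj1, hjs, hjc, _⟩ | ⟨h0, hσ⟩ | ⟨h0, hσ⟩
  · exact hused j hj1 hjs (by rw [hjs]; exact hjc)
  · rw [h0] at hfi
    exact hw0 hfi
  · rw [h0] at hwne
    exact hwne rfl

/-- closing the full cycle at the head -/
lemma head_cycle (V : Finset α) (C : Bool → α → Option (Finset α))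
    {f : ℕ → α} {n : ℕ} {s : Bool} {T : Finset α} (W : Walk V C f n s) (hn : 1 ≤ n)
    (hcase : C (sid s (n - 1)) (f (n - 1)) = some T)
    (hused : ∀ j, j + 1 < n → sid s j = sid s (n - 1) → C (sid s j) (f j) ≠ some T)
    (w : α) (hwne : w ≠ f (n - 1)) (hwc : C (sid s (n - 1)) w = some T)
    (hw0 : f 0 = w) :
    ∃ d, GoodD V C d := by
  rw [← hw0] at hwc hwne
  have hn1 : n ≠ 1 := by
    intro h
    rw [h] at hwne
    simp at hwne
  have hn2 : 2 ≤ n := by omega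
  have hσt : sid s (n - 1) = !s := by
    rcases charac W (show 0 < n by omega) (sid s (n - 1)) T hwc with
      ⟨j, hj1, hjs, hjc, _⟩ | ⟨h0, hσ⟩ | ⟨h0, hσ⟩
    · exact absurd (by rw [hjs]; exact hjc) (hused j hj1 hjs)
    · exact hσ
    · omega
  have hpar : (n - 1) % 2 = 1 := by
    have : sid s (n - 1) ≠ sid s 0 := by
      rw [hσt, sid_zero]
      cases s <;> simp
    rw [Ne, sid_eq_iff] at this
    omega
  have hev : n % 2 = 0 := by omega
  refine ⟨dW f n, cycle_good W hn2 hev ?_ ?_ ?_⟩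
  · rw [← hσt]
    rw [hwc, hcase]
  · rw [← hσt, hwc]
    simp
  · intro i hi hsi
    rw [← hσt] at hsi ⊢
    rw [hwc]
    exact hused i hi hsi
  
/-- growth with verified head -/
lemma grow (V : Finset α) (C : Bool → α → Option (Finset α))
    (hdeg : ∀ (σ : Bool), ∀ v ∈ V, ∀ T, C σ v = some T → ∃ w ∈ V, w ≠ v ∧ C σ w = some T) :
    ∀ (fuel n : ℕ) (f : ℕ → α) (s : Bool), Walk V C f n s → 1 ≤ n →
      V.card - n ≤ fuel → C (!s) (f 0) = none →
      ∃ d, GoodD V C d := by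
  intro fuel
  induction fuel with
  | zero =>
      intro n f s W hn hfuel Hhead
      rcases hcase : C (sid s (n - 1)) (f (n - 1)) with _ | T
      · exact ⟨dW f n, path_good W hn Hhead hcase⟩
      · by_cases hused : ∃ j, j + 1 < n ∧ sid s j = sid s (n - 1) ∧
            C (sid s j) (f j) = some T
        · obtain ⟨j, hj1, hjs, hjc⟩ := hused
          exact cycle_segment V C W hn hcase j hj1 hjs hjc
        · push_neg at hused
          exfalso
          obtain ⟨w, hwV, hwne, hwc⟩ :=
            hdeg (sid s (n - 1)) (f (n - 1)) (W.dom (n - 1) (by omega)) T hcase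
          have hwfresh : ∀ i, i < n → f i ≠ w :=
            fresh V C W hn Hhead hcase (fun j hj hjs hjc => hused j hj hjs hjc) w hwne hwc
          obtain ⟨W', _⟩ := extend V C W hn hcase
            (fun j hj hjs hjc => hused j hj hjs hjc) w hwV hwc hwfresh
          have hcard := walk_card_le W'
          omega
  | succ fuel ih =>
      intro n f s W hn hfuel Hhead
      rcases hcase : C (sid s (n - 1)) (f (n - 1)) with _ | T
      · exact ⟨dW f n, path_good W hn Hhead hcase⟩
      · by_cases hused : ∃ j, j + 1 < n ∧ sid s j = sid s (n - 1) ∧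
            C (sid s j) (f j) = some T
        · obtain ⟨j, hj1, hjs, hjc⟩ := hused
          exact cycle_segment V C W hn hcase j hj1 hjs hjc
        · push_neg at hused
          obtain ⟨w, hwV, hwne, hwc⟩ :=
            hdeg (sid s (n - 1)) (f (n - 1)) (W.dom (n - 1) (by omega)) T hcase
          have hwfresh : ∀ i, i < n → f i ≠ w :=
            fresh V C W hn Hhead hcase (fun j hj hjs hjc => hused j hj hjs hjc) w hwne hwc
          obtain ⟨W', hf'0⟩ := extend V C W hn hcase
            (fun j hj hjs hjc => hused j hj hjs hjc) w hwV hwc hwfresh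
          have hcard := walk_card_le W'
          refine ih (n + 1) _ s W' (by omega) (by omega) ?_
          have h0 : ¬ ((0:ℕ) = n) := by omega
          show C (!s) (if (0:ℕ) = n then w else f 0) = none
          rw [if_neg h0]
          exact Hhead

/-- phase 1 : growth with unverified head -/
lemma phase1 (V : Finset α) (C : Bool → α → Option (Finset α))
    (hdeg : ∀ (σ : Bool), ∀ v ∈ V, ∀ T, C σ v = some T → ∃ w ∈ V, w ≠ v ∧ C σ w = some T) :
    ∀ (fuel n : ℕ) (f : ℕ → α) (s : Bool), Walk V C f n s → 1 ≤ n →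
      V.card - n ≤ fuel →
      (∃ d, GoodD V C d) ∨
        (∃ (n' : ℕ) (f' : ℕ → α) (s' : Bool), Walk V C f' n' s' ∧ 1 ≤ n' ∧
          C (sid s' (n' - 1)) (f' (n' - 1)) = none) := by
  intro fuel
  induction fuel with
  | zero =>
      intro n f s W hn hfuel
      rcases hcase : C (sid s (n - 1)) (f (n - 1)) with _ | T
      · exact Or.inr ⟨n, f, s, W, hn, hcase⟩
      · by_cases hused : ∃ j, j + 1 < n ∧ sid s j = sid s (n - 1) ∧
            C (sid s j) (f j) = some T
        · obtain ⟨j, hj1, hjs, hjc⟩ := hused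
          exact Or.inl (cycle_segment V C W hn hcase j hj1 hjs hjc)
        · push_neg at hused
          obtain ⟨w, hwV, hwne, hwc⟩ :=
            hdeg (sid s (n - 1)) (f (n - 1)) (W.dom (n - 1) (by omega)) T hcase
          by_cases hw0 : f 0 = w
          · -- closing the full cycle at the head
            exact Or.inl (head_cycle V C W hn hcase
              (fun j hj hjs hjc => hused j hj hjs hjc) w hwne hwc hw0)
          · have hwfresh : ∀ i, i < n → f i ≠ w := fresh1 V C W hn hcase
              (fun j hj hjs hjc => hused j hj hjs hjc) w hwne hwc hw0
            exfalso
            obtain ⟨W', _⟩ := extend V C W hn hcase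
              (fun j hj hjs hjc => hused j hj hjs hjc) w hwV hwc hwfresh
            have hcard := walk_card_le W'
            omega
  | succ fuel ih =>
      intro n f s W hn hfuel
      rcases hcase : C (sid s (n - 1)) (f (n - 1)) with _ | T
      · exact Or.inr ⟨n, f, s, W, hn, hcase⟩
      · by_cases hused : ∃ j, j + 1 < n ∧ sid s j = sid s (n - 1) ∧
            C (sid s j) (f j) = some T
        · obtain ⟨j, hj1, hjs, hjc⟩ := hused
          exact Or.inl (cycle_segment V C W hn hcase j hj1 hjs hjc)
        · push_neg at hused
          obtain ⟨w, hwV, hwne, hwc⟩ :=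
            hdeg (sid s (n - 1)) (f (n - 1)) (W.dom (n - 1) (by omega)) T hcase
          by_cases hw0 : f 0 = w
          · exact Or.inl (head_cycle V C W hn hcase
              (fun j hj hjs hjc => hused j hj hjs hjc) w hwne hwc hw0)
          · have hwfresh : ∀ i, i < n → f i ≠ w := fresh1 V C W hn hcase
              (fun j hj hjs hjc => hused j hj hjs hjc) w hwne hwc hw0
            obtain ⟨W', _⟩ := extend V C W hn hcase
              (fun j hj hjs hjc => hused j hj hjs hjc) w hwV hwc hwfresh
            exact ih (n + 1) _ s W' (by omega) (by omega)

end NashW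

namespace NashW

variable {α : Type*} [DecidableEq α]

theorem abstract_sign (V : Finset α) (C : Bool → α → Option (Finset α))
    (hdeg : ∀ (σ : Bool), ∀ v ∈ V, ∀ T, C σ v = some T → ∃ w ∈ V, w ≠ v ∧ C σ w = some T)
    (hne : V.Nonempty) : ∃ d, GoodD V C d := by
  obtain ⟨v₀, hv₀⟩ := hne
  have W0 : Walk V C (fun _ => v₀) 1 true :=
    ⟨fun i _ => hv₀, fun i hi j hj _ => by omega,
      fun i hi => absurd hi (by omega), fun i j hi hj _ _ => by omega⟩
  rcases phase1 V C hdeg V.card 1 (fun _ => v₀) true W0 le_rfl (by omega) with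
    h | ⟨n, f, s, W, hn, htail⟩
  · exact h
  · by_cases hn1 : n = 1
    · subst hn1
      refine grow V C hdeg V.card 1 f (!s)
        ⟨W.dom, W.inj, fun i hi => absurd hi (by omega),
          fun i j hi hj _ _ => by omega⟩ le_rfl (by omega) ?_
      rw [Bool.not_not]
      have h2 := htail
      rw [show (1:ℕ) - 1 = 0 from rfl, sid_zero] at h2
      exact h2
    · have hn2 : 2 ≤ n := by omega
      have hsides : ∀ i, i ≤ n - 2 → sid (sid s (n - 2)) i = sid s (n - 2 - i) := by
        intro i hi
        rw [sid_shift, sid_eq_iff]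
        omega
      have Wr : Walk V C (fun i => f (n - 1 - i)) n (sid s (n - 2)) := by
        refine ⟨?_, ?_, ?_, ?_⟩
        · intro i hi
          exact W.dom _ (by omega)
        · intro i hi j hj hij
          have := W.inj (n - 1 - i) (by omega) (n - 1 - j) (by omega) hij
          omega
        · intro i hi
          show C (sid (sid s (n - 2)) i) (f (n - 1 - i)) =
              C (sid (sid s (n - 2)) i) (f (n - 1 - (i + 1))) ∧ _
          rw [hsides i (by omega)]
          obtain ⟨heq, hsome⟩ := W.link (n - 2 - i) (by omega)
          have e1 : n - 1 - i = (n - 2 - i) + 1 := by omega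
          have e2 : n - 1 - (i + 1) = n - 2 - i := by omega
          rw [e1, e2]
          exact ⟨heq.symm, by rw [← heq]; exact hsome⟩
        · intro i j hi hj hss hcc
          have hssr : sid s (n - 2 - i) = sid s (n - 2 - j) := by
            rw [← hsides i (by omega), ← hsides j (by omega)]
            exact hss
          obtain ⟨heqi, _⟩ := W.link (n - 2 - i) (by omega)
          obtain ⟨heqj, _⟩ := W.link (n - 2 - j) (by omega)
          have hccr : C (sid s (n - 2 - i)) (f (n - 2 - i)) =
              C (sid s (n - 2 - j)) (f (n - 2 - j)) := by
            rw [heqi, heqj]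
            have e1 : (n - 2 - i) + 1 = n - 1 - i := by omega
            have e2 : (n - 2 - j) + 1 = n - 1 - j := by omega
            rw [e1, e2]
            have c1 : C (sid (sid s (n - 2)) i) ((fun i => f (n - 1 - i)) i)
                = C (sid s (n - 2 - i)) (f (n - 1 - i)) := by rw [hsides i (by omega)]
            have c2 : C (sid (sid s (n - 2)) j) ((fun i => f (n - 1 - i)) j)
                = C (sid s (n - 2 - j)) (f (n - 1 - j)) := by rw [hsides j (by omega)]
            rw [← c1, ← c2]
            exact hcc
          have := W.dist (n - 2 - i) (n - 2 - j) (by omega) (by omega) hssr hccr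
          omega
      refine grow V C hdeg V.card n (fun i => f (n - 1 - i)) (sid s (n - 2)) Wr hn
        (by omega) ?_
      show C (!(sid s (n - 2))) (f (n - 1 - 0)) = none
      have hnot : (!(sid s (n - 2))) = sid s (n - 1) := by
        have := sid_succ s (n - 2)
        rw [show (n - 2) + 1 = n - 1 by omega] at this
        rw [this]
      rw [hnot, show n - 1 - 0 = n - 1 from rfl]
      exact htail

end NashW

namespace NashW

variable {α : Type*} [DecidableEq α]

/-- minimal tight set of a family containing `v` -/
noncomputable def minT (FAM : Finset (Finset α)) (ℓ : ℕ) (y : α → ℤ) (v : α) :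
    Option (Finset α) :=
  if h : (FAM.filter (fun P => ((ℓ : ℤ) ∣ ∑ u ∈ P, y u) ∧ v ∈ P)).Nonempty
  then some (Finset.exists_min_image _ Finset.card h).choose
  else none

lemma minT_mem {FAM : Finset (Finset α)} {ℓ : ℕ} {y : α → ℤ} {v : α} {T : Finset α}
    (h : minT FAM ℓ y v = some T) :
    T ∈ FAM ∧ ((ℓ : ℤ) ∣ ∑ u ∈ T, y u) ∧ v ∈ T ∧
      ∀ Q ∈ FAM, ((ℓ : ℤ) ∣ ∑ u ∈ Q, y u) → v ∈ Q → T.card ≤ Q.card := by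
  unfold minT at h
  split at h
  case isTrue hne =>
    obtain ⟨hmem, hmin⟩ := (Finset.exists_min_image _ Finset.card hne).choose_spec
    injection h with h
    subst h
    rw [Finset.mem_filter] at hmem
    refine ⟨hmem.1, hmem.2.1, hmem.2.2, ?_⟩
    intro Q hQ hQd hQv
    exact hmin Q (by rw [Finset.mem_filter]; exact ⟨hQ, hQd, hQv⟩)
  case isFalse => exact absurd h (by simp)

lemma minT_isSome {FAM : Finset (Finset α)} {ℓ : ℕ} {y : α → ℤ} {v : α} {P : Finset α}
    (hP : P ∈ FAM) (hd : (ℓ : ℤ) ∣ ∑ u ∈ P, y u) (hv : v ∈ P) :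
    ∃ T, minT FAM ℓ y v = some T := by
  unfold minT
  rw [dif_pos ⟨P, by rw [Finset.mem_filter]; exact ⟨hP, hd, hv⟩⟩]
  exact ⟨_, rfl⟩

lemma minT_subset {FAM : Finset (Finset α)} {ℓ : ℕ} {y : α → ℤ} {v : α} {T Q : Finset α}
    (hlam : ∀ P ∈ FAM, ∀ Q ∈ FAM, P ⊆ Q ∨ Q ⊆ P ∨ P ∩ Q = ∅)
    (h : minT FAM ℓ y v = some T)
    (hQ : Q ∈ FAM) (hd : (ℓ : ℤ) ∣ ∑ u ∈ Q, y u) (hv : v ∈ Q) : T ⊆ Q := by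
  obtain ⟨hTf, hTd, hTv, hmin⟩ := minT_mem h
  have hcard := hmin Q hQ hd hv
  rcases hlam T hTf Q hQ with h1 | h1 | h1
  · exact h1
  · have := Finset.eq_of_subset_of_card_le h1 hcard
    rw [this]
  · exfalso
    have : v ∈ T ∩ Q := Finset.mem_inter.mpr ⟨hTv, hv⟩
    rw [h1] at this
    exact absurd this (Finset.notMem_empty v)

/-- divisibility of class sums -/
lemma class_dvd (S : Finset α) (FAM : Finset (Finset α)) (ℓ : ℕ) (y : α → ℤ)
    (hlam : ∀ P ∈ FAM, ∀ Q ∈ FAM, P ⊆ Q ∨ Q ⊆ P ∨ P ∩ Q = ∅)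
    (hS : ∀ P ∈ FAM, P ⊆ S)
    (hint : ∀ v ∈ S, ¬(0 < y v ∧ y v < ℓ) → (ℓ : ℤ) ∣ y v) :
    ∀ (k : ℕ) (T : Finset α), T ∈ FAM → T.card ≤ k → ((ℓ : ℤ) ∣ ∑ u ∈ T, y u) →
      (ℓ : ℤ) ∣ ∑ w ∈ (S.filter (fun v => 0 < y v ∧ y v < ℓ)).filter
        (fun w => minT FAM ℓ y w = some T), y w := by
  intro k
  induction k with
  | zero =>
    intro T hT hcard hdvd
    have hTe : T = ∅ := Finset.card_eq_zero.mp (by omega)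
    have : (S.filter (fun v => 0 < y v ∧ y v < ℓ)).filter
        (fun w => minT FAM ℓ y w = some T) = ∅ := by
      rw [Finset.eq_empty_iff_forall_notMem]
      intro w hw
      rw [Finset.mem_filter] at hw
      have := (minT_mem hw.2).2.2.1
      rw [hTe] at this
      exact absurd this (Finset.notMem_empty w)
    rw [this]
    simp
  | succ k ih =>
    intro T hT hcard hdvd
    set F := S.filter (fun v => 0 < y v ∧ y v < ℓ) with hF
    set A := T.filter (fun u => u ∈ F) with hA
    -- split the tight sum
    have hsplit : ∑ u ∈ T, y u = (∑ u ∈ A, y u) + ∑ u ∈ T.filter (fun u => ¬ u ∈ F), y u := by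
      rw [hA]
      exact (Finset.sum_filter_add_sum_filter_not T _ y).symm
    have hdvd2 : (ℓ : ℤ) ∣ ∑ u ∈ T.filter (fun u => ¬ u ∈ F), y u := by
      apply Finset.dvd_sum
      intro u hu
      rw [Finset.mem_filter] at hu
      apply hint u (hS T hT hu.1)
      intro hc
      exact hu.2 (by rw [hF, Finset.mem_filter]; exact ⟨hS T hT hu.1, hc⟩)
    have hdvdA : (ℓ : ℤ) ∣ ∑ u ∈ A, y u := by
      have : (∑ u ∈ A, y u) = (∑ u ∈ T, y u) - ∑ u ∈ T.filter (fun u => ¬ u ∈ F), y u := by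
        omega
      rw [this]
      exact dvd_sub hdvd hdvd2
    -- fiberwise decomposition of A
    have hmaps : ∀ u ∈ A, minT FAM ℓ y u ∈ A.image (minT FAM ℓ y) :=
      fun u hu => Finset.mem_image_of_mem _ hu
    have hfib := Finset.sum_fiberwise_of_maps_to hmaps y
    -- each fiber is a full class of a tight subset of T
    have hfiber_eq : ∀ c ∈ A.image (minT FAM ℓ y), ∃ T', c = some T' ∧ T' ∈ FAM ∧
        ((ℓ : ℤ) ∣ ∑ u ∈ T', y u) ∧ T' ⊆ T ∧
        A.filter (fun u => minT FAM ℓ y u = c) = F.filter (fun w => minT FAM ℓ y w = some T') := by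
      intro c hc
      rw [Finset.mem_image] at hc
      obtain ⟨u₀, hu₀, hc⟩ := hc
      rw [hA, Finset.mem_filter] at hu₀
      obtain ⟨hu₀T, hu₀F⟩ := hu₀
      obtain ⟨T', hT'⟩ := minT_isSome hT hdvd hu₀T
      rw [hT'] at hc
      subst hc
      obtain ⟨hT'f, hT'd, _, _⟩ := minT_mem hT'
      have hT'T : T' ⊆ T := minT_subset hlam hT' hT hdvd hu₀T
      refine ⟨T', rfl, hT'f, hT'd, hT'T, ?_⟩
      ext w
      simp only [Finset.mem_filter, hA, hF] at *
      constructor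
      · rintro ⟨⟨hwT, hwS, hwf⟩, hwm⟩
        exact ⟨⟨hwS, hwf⟩, hwm⟩
      · rintro ⟨⟨hwS, hwf⟩, hwm⟩
        have hwT' : w ∈ T' := (minT_mem hwm).2.2.1
        exact ⟨⟨hT'T hwT', hwS, hwf⟩, hwm⟩
    -- conclude
    by_cases hTin : some T ∈ A.image (minT FAM ℓ y)
    · have hsum2 : ∑ u ∈ A, y u =
          (∑ u ∈ A.filter (fun u => minT FAM ℓ y u = some T), y u) +
          ∑ c ∈ (A.image (minT FAM ℓ y)).erase (some T),
            ∑ u ∈ A.filter (fun u => minT FAM ℓ y u = c), y u := by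
        rw [← hfib, ← Finset.add_sum_erase _ _ hTin]
      have hdvd3 : (ℓ : ℤ) ∣ ∑ c ∈ (A.image (minT FAM ℓ y)).erase (some T),
          ∑ u ∈ A.filter (fun u => minT FAM ℓ y u = c), y u := by
        apply Finset.dvd_sum
        intro c hc
        obtain ⟨T', rfl, hT'f, hT'd, hT'T, heq⟩ :=
          hfiber_eq c (Finset.mem_of_mem_erase hc)
        rw [heq]
        have hne : T' ≠ T := by
          intro h
          rw [h] at hc
          exact (Finset.notMem_erase _ _) hc
        have hcard' : T'.card ≤ k := by
          have hlt : T'.card < T.card := Finset.card_lt_card (ssubset_of_subset_of_ne hT'T hne)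
          omega
        exact ih T' hT'f hcard' hT'd
      have heqT : A.filter (fun u => minT FAM ℓ y u = some T)
          = F.filter (fun w => minT FAM ℓ y w = some T) := by
        obtain ⟨T', hTeq, _, _, _, heq⟩ := hfiber_eq (some T) hTin
        injection hTeq with hTeq
        rw [heq, ← hTeq]
      rw [← heqT]
      have : ∑ u ∈ A.filter (fun u => minT FAM ℓ y u = some T), y u =
          (∑ u ∈ A, y u) - ∑ c ∈ (A.image (minT FAM ℓ y)).erase (some T),
            ∑ u ∈ A.filter (fun u => minT FAM ℓ y u = c), y u := by omega
      rw [this]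
      exact dvd_sub hdvdA hdvd3
    · have : F.filter (fun w => minT FAM ℓ y w = some T) = ∅ := by
        rw [Finset.eq_empty_iff_forall_notMem]
        intro w hw
        rw [Finset.mem_filter] at hw
        apply hTin
        rw [Finset.mem_image]
        refine ⟨w, ?_, hw.2⟩
        rw [hA, Finset.mem_filter]
        exact ⟨(minT_mem hw.2).2.2.1, hw.1⟩
      rw [this]
      simp

end NashW

namespace NashW

variable {α : Type*} [DecidableEq α]

lemma sub_bound {K B : Finset α} {d : α → ℤ} (hBK : B ⊆ K)
    (hunit : ∀ v ∈ K, d v = 1 ∨ d v = -1) (hcard : K.card ≤ 2)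
    (hsum : K.card = 2 → ∑ v ∈ K, d v = 0) : |∑ v ∈ B, d v| ≤ 1 := by
  have hBc : B.card ≤ 2 := le_trans (Finset.card_le_card hBK) hcard
  rcases hB0 : B.card with _ | n
  · rw [Finset.card_eq_zero.mp hB0]
    simp
  · rcases n with _ | n
    · obtain ⟨v, hv⟩ := Finset.card_eq_one.mp hB0
      rw [hv, Finset.sum_singleton]
      rcases hunit v (hBK (hv ▸ Finset.mem_singleton_self v)) with h | h <;> rw [h] <;> norm_num
    · have hB2 : B.card = 2 := by omega
      have hle := Finset.card_le_card hBK
      have hK2 : K.card = 2 := by omega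
      have hBKeq : B = K := Finset.eq_of_subset_of_card_le hBK (by omega)
      rw [hBKeq, hsum hK2]
      simp

end NashW

namespace NashW

variable {α : Type*} [DecidableEq α]

/-- per-set control of a good direction, for one laminar family -/
lemma famsum (S : Finset α) (FAM : Finset (Finset α)) (ℓ : ℕ) (y d : α → ℤ)
    (hlam : ∀ P ∈ FAM, ∀ Q ∈ FAM, P ⊆ Q ∨ Q ⊆ P ∨ P ∩ Q = ∅)
    (hsupp : ∀ v, d v ≠ 0 → v ∈ S.filter (fun v => 0 < y v ∧ y v < ℓ))
    (hunit : ∀ v, d v = 0 ∨ d v = 1 ∨ d v = -1)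
    (hclass : ∀ T : Finset α,
      ((S.filter (fun v => 0 < y v ∧ y v < ℓ)).filter
        (fun v => minT FAM ℓ y v = some T ∧ d v ≠ 0)).card ≤ 2 ∧
      ∑ v ∈ (S.filter (fun v => 0 < y v ∧ y v < ℓ)).filter
        (fun v => minT FAM ℓ y v = some T ∧ d v ≠ 0), d v = 0)
    (hbot : ((S.filter (fun v => 0 < y v ∧ y v < ℓ)).filter
        (fun v => minT FAM ℓ y v = none ∧ d v ≠ 0)).card ≤ 2 ∧
      (((S.filter (fun v => 0 < y v ∧ y v < ℓ)).filter
        (fun v => minT FAM ℓ y v = none ∧ d v ≠ 0)).card = 2 →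
       ∑ v ∈ (S.filter (fun v => 0 < y v ∧ y v < ℓ)).filter
        (fun v => minT FAM ℓ y v = none ∧ d v ≠ 0), d v = 0)) :
    ∀ P ∈ FAM, |∑ v ∈ P, d v| ≤ 1 ∧
      (((ℓ : ℤ) ∣ ∑ v ∈ P, y v) → ∑ v ∈ P, d v = 0) := by
  classical
  intro P hP
  set F := S.filter (fun v => 0 < y v ∧ y v < ℓ) with hF
  set A := P.filter (fun v => d v ≠ 0) with hA
  have hPA : ∑ v ∈ P, d v = ∑ v ∈ A, d v := by
    rw [hA]
    exact (Finset.sum_filter_of_ne (fun v _ h => h)).symm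
  have hmaps : ∀ u ∈ A, minT FAM ℓ y u ∈ A.image (minT FAM ℓ y) :=
    fun u hu => Finset.mem_image_of_mem _ hu
  have hfib := Finset.sum_fiberwise_of_maps_to hmaps d
  -- inner predicate
  set Inner : Option (Finset α) → Prop := fun c => ∃ T', c = some T' ∧ T' ⊆ P with hInner
  -- inner fibers sum to zero
  have hinner : ∀ c ∈ A.image (minT FAM ℓ y), Inner c →
      ∑ u ∈ A.filter (fun u => minT FAM ℓ y u = c), d u = 0 := by
    intro c hc hci
    obtain ⟨T', rfl, hT'P⟩ := hci
    have heq : A.filter (fun u => minT FAM ℓ y u = some T')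
        = F.filter (fun v => minT FAM ℓ y v = some T' ∧ d v ≠ 0) := by
      ext w
      simp only [hA, Finset.mem_filter]
      constructor
      · rintro ⟨⟨hwP, hwd⟩, hwm⟩
        have := hsupp w hwd
        rw [hF]
        exact ⟨this, hwm, hwd⟩
      · rintro ⟨hwF, hwm, hwd⟩
        exact ⟨⟨hT'P ((minT_mem hwm).2.2.1), hwd⟩, hwm⟩
    rw [heq]
    exact (hclass T').2
  -- non-inner fibers bounded by 1
  have hnoninner : ∀ c ∈ A.image (minT FAM ℓ y), ¬ Inner c →
      |∑ u ∈ A.filter (fun u => minT FAM ℓ y u = c), d u| ≤ 1 := by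
    intro c hc hnc
    have hunitK : ∀ (K : Finset α), (∀ v ∈ K, d v ≠ 0) → ∀ v ∈ K, d v = 1 ∨ d v = -1 := by
      intro K hK v hv
      rcases hunit v with h | h | h
      · exact absurd h (hK v hv)
      · exact Or.inl h
      · exact Or.inr h
    rcases c with _ | T'
    · -- none fiber
      have hsub : A.filter (fun u => minT FAM ℓ y u = none) ⊆
          F.filter (fun v => minT FAM ℓ y v = none ∧ d v ≠ 0) := by
        intro w hw
        simp only [hA, Finset.mem_filter] at hw ⊢
        exact ⟨hsupp w hw.1.2, hw.2, hw.1.2⟩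
      exact sub_bound hsub
        (hunitK _ (fun v hv => by
          rw [Finset.mem_filter] at hv
          exact hv.2.2)) hbot.1 hbot.2
    · -- some T' with ¬ T' ⊆ P
      have hsub : A.filter (fun u => minT FAM ℓ y u = some T') ⊆
          F.filter (fun v => minT FAM ℓ y v = some T' ∧ d v ≠ 0) := by
        intro w hw
        simp only [hA, Finset.mem_filter] at hw ⊢
        exact ⟨hsupp w hw.1.2, hw.2, hw.1.2⟩
      exact sub_bound hsub
        (hunitK _ (fun v hv => by
          rw [Finset.mem_filter] at hv
          exact hv.2.2)) (hclass T').1 (fun _ => (hclass T').2)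
  -- at most one non-inner fiber
  have huniq : ∀ c₁ ∈ A.image (minT FAM ℓ y), ∀ c₂ ∈ A.image (minT FAM ℓ y),
      ¬ Inner c₁ → ¬ Inner c₂ → c₁ = c₂ := by
    intro c₁ hc₁ c₂ hc₂ hn₁ hn₂
    rw [Finset.mem_image] at hc₁ hc₂
    obtain ⟨v₁, hv₁A, hv₁⟩ := hc₁
    obtain ⟨v₂, hv₂A, hv₂⟩ := hc₂
    rw [hA, Finset.mem_filter] at hv₁A hv₂A
    -- helper : for a non-inner some-class, P ⊆ T'
    have key : ∀ (v : α) (T' : Finset α), v ∈ P → minT FAM ℓ y v = some T' →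
        ¬ Inner (some T') → P ⊆ T' := by
      intro v T' hvP hvm hni
      obtain ⟨hT'f, hT'd, hvT', _⟩ := minT_mem hvm
      have hnsub : ¬ T' ⊆ P := fun h => hni ⟨T', rfl, h⟩
      rcases hlam T' hT'f P hP with h | h | h
      · exact absurd h hnsub
      · exact h
      · exfalso
        have : v ∈ T' ∩ P := Finset.mem_inter.mpr ⟨hvT', hvP⟩
        rw [h] at this
        exact absurd this (Finset.notMem_empty v)
    rcases hc1e : c₁ with _ | T₁ <;> rcases hc2e : c₂ with _ | T₂
    · rfl
    · -- c₁ none, c₂ some T₂ : impossible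
      exfalso
      rw [hc2e] at hv₂
      have hPT₂ : P ⊆ T₂ := key v₂ T₂ hv₂A.1 hv₂ (hc2e ▸ hn₂)
      obtain ⟨hT₂f, hT₂d, _, _⟩ := minT_mem hv₂
      obtain ⟨T₀, hT₀⟩ := minT_isSome hT₂f hT₂d (hPT₂ hv₁A.1)
      rw [hc1e] at hv₁
      rw [hv₁] at hT₀
      exact absurd hT₀ (by simp)
    · exfalso
      rw [hc1e] at hv₁
      have hPT₁ : P ⊆ T₁ := key v₁ T₁ hv₁A.1 hv₁ (hc1e ▸ hn₁)
      obtain ⟨hT₁f, hT₁d, _, _⟩ := minT_mem hv₁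
      obtain ⟨T₀, hT₀⟩ := minT_isSome hT₁f hT₁d (hPT₁ hv₂A.1)
      rw [hc2e] at hv₂
      rw [hv₂] at hT₀
      exact absurd hT₀ (by simp)
    · -- both some : equal
      rw [hc1e] at hv₁
      rw [hc2e] at hv₂
      have hPT₁ : P ⊆ T₁ := key v₁ T₁ hv₁A.1 hv₁ (hc1e ▸ hn₁)
      have hPT₂ : P ⊆ T₂ := key v₂ T₂ hv₂A.1 hv₂ (hc2e ▸ hn₂)
      obtain ⟨hT₁f, hT₁d, hv₁T₁, hmin₁⟩ := minT_mem hv₁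
      obtain ⟨hT₂f, hT₂d, hv₂T₂, hmin₂⟩ := minT_mem hv₂
      have hc12 : T₁.card ≤ T₂.card := hmin₁ T₂ hT₂f hT₂d (hPT₂ hv₁A.1)
      have hc21 : T₂.card ≤ T₁.card := hmin₂ T₁ hT₁f hT₁d (hPT₁ hv₂A.1)
      have : T₁ = T₂ := by
        rcases hlam T₁ hT₁f T₂ hT₂f with h | h | h
        · exact Finset.eq_of_subset_of_card_le h hc21
        · exact (Finset.eq_of_subset_of_card_le h hc12).symm
        · exfalso
          have : v₁ ∈ T₁ ∩ T₂ := Finset.mem_inter.mpr ⟨hv₁T₁, hPT₂ hv₁A.1⟩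
          rw [h] at this
          exact absurd this (Finset.notMem_empty v₁)
      rw [this]
  -- assemble
  have hsplit : ∑ v ∈ A, d v =
      (∑ c ∈ (A.image (minT FAM ℓ y)).filter Inner,
        ∑ u ∈ A.filter (fun u => minT FAM ℓ y u = c), d u) +
      ∑ c ∈ (A.image (minT FAM ℓ y)).filter (fun c => ¬ Inner c),
        ∑ u ∈ A.filter (fun u => minT FAM ℓ y u = c), d u := by
    rw [Finset.sum_filter_add_sum_filter_not]
    exact hfib.symm
  have hinz : (∑ c ∈ (A.image (minT FAM ℓ y)).filter Inner,
      ∑ u ∈ A.filter (fun u => minT FAM ℓ y u = c), d u) = 0 := by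
    apply Finset.sum_eq_zero
    intro c hc
    rw [Finset.mem_filter] at hc
    exact hinner c hc.1 hc.2
  have hcard1 : ((A.image (minT FAM ℓ y)).filter (fun c => ¬ Inner c)).card ≤ 1 := by
    rw [Finset.card_le_one]
    intro c₁ hc₁ c₂ hc₂
    rw [Finset.mem_filter] at hc₁ hc₂
    exact huniq c₁ hc₁.1 c₂ hc₂.1 hc₁.2 hc₂.2
  constructor
  · rw [hPA, hsplit, hinz, zero_add]
    rcases Finset.card_le_one_iff_subset_singleton.mp hcard1 with ⟨c₀, hc₀⟩
    rcases Finset.subset_singleton_iff.mp hc₀ with he | he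
    · rw [he]; simp
    · rw [he, Finset.sum_singleton]
      have : c₀ ∈ (A.image (minT FAM ℓ y)).filter (fun c => ¬ Inner c) := by
        rw [he]; exact Finset.mem_singleton_self c₀
      rw [Finset.mem_filter] at this
      exact hnoninner c₀ this.1 this.2
  · intro hdvd
    -- P tight : every fiber is inner
    have hallinner : ∀ c ∈ A.image (minT FAM ℓ y), Inner c := by
      intro c hc
      rw [Finset.mem_image] at hc
      obtain ⟨v, hvA, hv⟩ := hc
      rw [hA, Finset.mem_filter] at hvA
      obtain ⟨T₀, hT₀⟩ := minT_isSome hP hdvd hvA.1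
      have hT₀P : T₀ ⊆ P := minT_subset hlam hT₀ hP hdvd hvA.1
      rw [← hv, hT₀]
      exact ⟨T₀, rfl, hT₀P⟩
    have : ((A.image (minT FAM ℓ y)).filter (fun c => ¬ Inner c)) = ∅ := by
      rw [Finset.eq_empty_iff_forall_notMem]
      intro c hc
      rw [Finset.mem_filter] at hc
      exact hc.2 (hallinner c hc.1)
    rw [hPA, hsplit, hinz, zero_add, this]
    simp

end NashW

namespace NashW

variable {α : Type*} [DecidableEq α]

lemma hdeg_fam (S : Finset α) (FAM : Finset (Finset α)) (ℓ : ℕ) (hℓ : 0 < ℓ) (y : α → ℤ)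
    (hlam : ∀ P ∈ FAM, ∀ Q ∈ FAM, P ⊆ Q ∨ Q ⊆ P ∨ P ∩ Q = ∅)
    (hS : ∀ P ∈ FAM, P ⊆ S)
    (hyr : ∀ v ∈ S, 0 ≤ y v ∧ y v ≤ ℓ) :
    ∀ v ∈ S.filter (fun v => 0 < y v ∧ y v < ℓ), ∀ T,
      minT FAM ℓ y v = some T →
      ∃ w ∈ S.filter (fun v => 0 < y v ∧ y v < ℓ), w ≠ v ∧ minT FAM ℓ y w = some T := by
  intro v hv T hvT
  set F := S.filter (fun v => 0 < y v ∧ y v < ℓ) with hF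
  have hint : ∀ u ∈ S, ¬(0 < y u ∧ y u < ℓ) → (ℓ : ℤ) ∣ y u := by
    intro u hu hnf
    obtain ⟨h1, h2⟩ := hyr u hu
    have : y u = 0 ∨ y u = ℓ := by
      push_neg at hnf
      omega
    rcases this with h | h <;> rw [h] <;> simp
  obtain ⟨hTf, hTd, hvTm, _⟩ := minT_mem hvT
  have hdvd := class_dvd S FAM ℓ y hlam hS hint T.card T hTf le_rfl hTd
  by_contra hcon
  push_neg at hcon
  have hclasseq : F.filter (fun w => minT FAM ℓ y w = some T) = {v} := by
    ext w
    rw [Finset.mem_filter, Finset.mem_singleton]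
    constructor
    · rintro ⟨hwF, hwm⟩
      by_contra hne
      exact hcon w hwF hne hwm
    · rintro rfl
      exact ⟨hv, hvT⟩
  rw [hclasseq, Finset.sum_singleton] at hdvd
  rw [hF, Finset.mem_filter] at hv
  obtain ⟨-, h1, h2⟩ := hv
  have := Int.le_of_dvd h1 hdvd
  omega

theorem signing (S : Finset α) (𝒜 ℬ : Finset (Finset α)) (ℓ : ℕ) (hℓ : 0 < ℓ)
    (h𝒜S : ∀ P ∈ 𝒜, P ⊆ S) (hℬS : ∀ P ∈ ℬ, P ⊆ S)
    (h𝒜 : ∀ P ∈ 𝒜, ∀ Q ∈ 𝒜, P ⊆ Q ∨ Q ⊆ P ∨ P ∩ Q = ∅)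
    (hℬ : ∀ P ∈ ℬ, ∀ Q ∈ ℬ, P ⊆ Q ∨ Q ⊆ P ∨ P ∩ Q = ∅)
    (y : α → ℤ) (hyr : ∀ v ∈ S, 0 ≤ y v ∧ y v ≤ ℓ)
    (v₀ : α) (hv₀ : v₀ ∈ S) (h1 : 0 < y v₀) (h2 : y v₀ < ℓ) :
    ∃ d : α → ℤ, (∃ v ∈ S, d v ≠ 0) ∧
      (∀ v, d v ≠ 0 → v ∈ S ∧ 0 < y v ∧ y v < ℓ) ∧
      (∀ v, d v = 0 ∨ d v = 1 ∨ d v = -1) ∧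
      ∀ P ∈ 𝒜 ∪ ℬ, |∑ v ∈ P, d v| ≤ 1 ∧ ((ℓ : ℤ) ∣ ∑ v ∈ P, y v → ∑ v ∈ P, d v = 0) := by
  classical
  set F := S.filter (fun v => 0 < y v ∧ y v < ℓ) with hF
  have hone : v₀ ∈ F := by
    rw [hF, Finset.mem_filter]
    exact ⟨hv₀, h1, h2⟩
  set C : Bool → α → Option (Finset α) :=
    fun b v => cond b (minT 𝒜 ℓ y v) (minT ℬ ℓ y v) with hC
  have hdeg : ∀ (σ : Bool), ∀ v ∈ F, ∀ T, C σ v = some T →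
      ∃ w ∈ F, w ≠ v ∧ C σ w = some T := by
    intro σ v hv T hvT
    cases σ
    · exact hdeg_fam S ℬ ℓ hℓ y hℬ hℬS hyr v hv T hvT
    · exact hdeg_fam S 𝒜 ℓ hℓ y h𝒜 h𝒜S hyr v hv T hvT
  obtain ⟨d, ⟨v₁, hv₁F, hv₁⟩, hsupp, hunit, hclassG, hbotG⟩ :=
    abstract_sign F C hdeg ⟨v₀, hone⟩
  have hsuppF : ∀ v, d v ≠ 0 → v ∈ F := hsupp
  refine ⟨d, ⟨v₁, (Finset.mem_filter.mp hv₁F).1, hv₁⟩, ?_, hunit, ?_⟩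
  · intro v hv
    have := hsuppF v hv
    rw [hF, Finset.mem_filter] at this
    exact ⟨this.1, this.2⟩
  · intro P hP
    rcases Finset.mem_union.mp hP with hPA | hPB
    · refine famsum S 𝒜 ℓ y d h𝒜 hsuppF hunit ?_ ?_ P hPA
      · intro T
        exact hclassG true T
      · exact hbotG true
    · refine famsum S ℬ ℓ y d hℬ hsuppF hunit ?_ ?_ P hPB
      · intro T
        exact hclassG false T
      · exact hbotG false

end NashW

namespace NashW

variable {α : Type*} [DecidableEq α]

/-- Validity of a (scaled) fractional selection. -/
def Valid (S : Finset α) (ℱ : Finset (Finset α)) (ℓ : ℕ) (y : α → ℤ) : Prop :=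
  (∀ v, v ∉ S → y v = 0) ∧ (∀ v ∈ S, 0 ≤ y v ∧ y v ≤ ℓ) ∧
  ∀ P ∈ ℱ, ((ℓ * (P.card / ℓ) : ℕ) : ℤ) ≤ ∑ v ∈ P, y v ∧
    (∑ v ∈ P, y v) ≤ ((ℓ * ((P.card + ℓ - 1) / ℓ) : ℕ) : ℤ)

lemma step (S : Finset α) (𝒜 ℬ : Finset (Finset α)) (ℓ : ℕ) (hℓ : 0 < ℓ)
    (h𝒜S : ∀ P ∈ 𝒜, P ⊆ S) (hℬS : ∀ P ∈ ℬ, P ⊆ S)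
    (h𝒜 : ∀ P ∈ 𝒜, ∀ Q ∈ 𝒜, P ⊆ Q ∨ Q ⊆ P ∨ P ∩ Q = ∅)
    (hℬ : ∀ P ∈ ℬ, ∀ Q ∈ ℬ, P ⊆ Q ∨ Q ⊆ P ∨ P ∩ Q = ∅)
    (y : α → ℤ) (hy : Valid S (𝒜 ∪ ℬ) ℓ y)
    (v₀ : α) (hv₀ : v₀ ∈ S) (h1 : 0 < y v₀) (h2 : y v₀ < ℓ) :
    ∃ y' : α → ℤ, Valid S (𝒜 ∪ ℬ) ℓ y' ∧
      (∑ v ∈ S, y' v * (ℓ - y' v)) + 1 ≤ ∑ v ∈ S, y v * (ℓ - y v) := by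
  obtain ⟨hns, hrange, hwin⟩ := hy
  obtain ⟨d, ⟨v₁, hv₁S, hv₁⟩, hsupp, hunit, hsets⟩ :=
    signing S 𝒜 ℬ ℓ hℓ h𝒜S hℬS h𝒜 hℬ y hrange v₀ hv₀ h1 h2
  have hdsq : ∀ v, d v ≠ 0 → d v ^ 2 = 1 := by
    intro v hv
    rcases hunit v with h | h | h
    · exact absurd h hv
    · rw [h]; ring
    · rw [h]; ring
  -- both y + d and y - d are valid
  have hval : ∀ ε : ℤ, ε = 1 ∨ ε = -1 → Valid S (𝒜 ∪ ℬ) ℓ (fun v => y v + ε * d v) := by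
    intro ε hε
    have hε1 : |ε| = 1 := by rcases hε with h | h <;> simp [h]
    refine ⟨?_, ?_, ?_⟩
    · intro v hv
      have : d v = 0 := by
        by_contra hc
        exact hv (hsupp v hc).1
      simp [this, hns v hv]
    · intro v hv
      by_cases hd : d v = 0
      · simpa [hd] using hrange v hv
      · obtain ⟨-, hA, hB⟩ := hsupp v hd
        have h1 : ε * d v = 1 ∨ ε * d v = -1 := by
          rcases hε with h | h <;> rcases hunit v with h' | h' | h' <;>
            simp [h, h'] at hd ⊢
        show 0 ≤ y v + ε * d v ∧ y v + ε * d v ≤ (ℓ : ℤ)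
        rcases h1 with h1 | h1 <;> rw [h1] <;> constructor <;> omega
    · intro P hP
      obtain ⟨hlo, hhi⟩ := hwin P hP
      have hsum : ∑ v ∈ P, (y v + ε * d v) = (∑ v ∈ P, y v) + ε * ∑ v ∈ P, d v := by
        rw [Finset.sum_add_distrib, Finset.mul_sum]
      rw [hsum]
      obtain ⟨habs, hdvd⟩ := hsets P hP
      by_cases hdv : (ℓ : ℤ) ∣ ∑ v ∈ P, y v
      · rw [hdvd hdv]; constructor <;> omega
      · have hlodvd : (ℓ : ℤ) ∣ ((ℓ * (P.card / ℓ) : ℕ) : ℤ) := by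
          push_cast; exact Dvd.intro _ rfl
        have hhidvd : (ℓ : ℤ) ∣ ((ℓ * ((P.card + ℓ - 1) / ℓ) : ℕ) : ℤ) := by
          push_cast; exact Dvd.intro _ rfl
        have hlo' : ((ℓ * (P.card / ℓ) : ℕ) : ℤ) + 1 ≤ ∑ v ∈ P, y v := by
          rcases lt_or_eq_of_le hlo with h | h
          · omega
          · exact absurd (h ▸ hlodvd) hdv
        have hhi' : (∑ v ∈ P, y v) ≤ ((ℓ * ((P.card + ℓ - 1) / ℓ) : ℕ) : ℤ) - 1 := by
          rcases lt_or_eq_of_le hhi with h | h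
          · omega
          · exact absurd (h ▸ hhidvd) hdv
        have := abs_le.mp habs
        have : |ε * ∑ v ∈ P, d v| ≤ 1 := by
          rw [abs_mul, hε1, one_mul]; exact habs
        have := abs_le.mp this
        constructor <;> omega
  -- potential identity
  have hkey : (∑ v ∈ S, (y v + d v) * (ℓ - (y v + d v)))
      + (∑ v ∈ S, (y v - d v) * (ℓ - (y v - d v)))
      = 2 * (∑ v ∈ S, y v * (ℓ - y v)) - 2 * ∑ v ∈ S, d v ^ 2 := by
    rw [← Finset.sum_add_distrib, Finset.mul_sum, Finset.mul_sum, ← Finset.sum_sub_distrib]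
    apply Finset.sum_congr rfl
    intro v hv; ring
  have hsq1 : (1 : ℤ) ≤ ∑ v ∈ S, d v ^ 2 := by
    have h := Finset.single_le_sum (f := fun v => d v ^ 2)
      (fun i _ => sq_nonneg (d i)) hv₁S
    rw [hdsq v₁ hv₁] at h
    exact h
  rcases le_total (∑ v ∈ S, (y v + d v) * (ℓ - (y v + d v)))
      (∑ v ∈ S, (y v - d v) * (ℓ - (y v - d v))) with h | h
  · refine ⟨fun v => y v + 1 * d v, hval 1 (Or.inl rfl), ?_⟩
    simp only [one_mul]
    omega
  · refine ⟨fun v => y v + (-1) * d v, hval (-1) (Or.inr rfl), ?_⟩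
    have heq : ∀ v, y v + (-1) * d v = y v - d v := by intro v; ring
    simp only [heq]
    omega

lemma phi_nonneg (S : Finset α) (ℓ : ℕ) (y : α → ℤ)
    (hr : ∀ v ∈ S, 0 ≤ y v ∧ y v ≤ ℓ) : 0 ≤ ∑ v ∈ S, y v * (ℓ - y v) := by
  apply Finset.sum_nonneg
  intro v hv
  obtain ⟨h1, h2⟩ := hr v hv
  have : 0 ≤ (ℓ : ℤ) - y v := by omega
  exact mul_nonneg h1 this

/-- Pushing: from any valid point, reach an integral valid point. -/
theorem push (S : Finset α) (𝒜 ℬ : Finset (Finset α)) (ℓ : ℕ) (hℓ : 0 < ℓ)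
    (h𝒜S : ∀ P ∈ 𝒜, P ⊆ S) (hℬS : ∀ P ∈ ℬ, P ⊆ S)
    (h𝒜 : ∀ P ∈ 𝒜, ∀ Q ∈ 𝒜, P ⊆ Q ∨ Q ⊆ P ∨ P ∩ Q = ∅)
    (hℬ : ∀ P ∈ ℬ, ∀ Q ∈ ℬ, P ⊆ Q ∨ Q ⊆ P ∨ P ∩ Q = ∅) :
    ∀ (N : ℕ) (y : α → ℤ), Valid S (𝒜 ∪ ℬ) ℓ y →
      (∑ v ∈ S, y v * (ℓ - y v)).toNat ≤ N →
      ∃ z : α → ℤ, Valid S (𝒜 ∪ ℬ) ℓ z ∧ ∀ v ∈ S, z v = 0 ∨ z v = (ℓ : ℤ) := by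
  intro N
  induction N with
  | zero =>
    intro y hy hΦ
    refine ⟨y, hy, ?_⟩
    intro v hv
    by_contra hcon
    push_neg at hcon
    obtain ⟨ha, hb⟩ := hy.2.1 v hv
    have h1 : 0 < y v := lt_of_le_of_ne ha (fun h => hcon.1 h.symm)
    have h2 : y v < ℓ := lt_of_le_of_ne hb hcon.2
    obtain ⟨y', hy', hΦ'⟩ := step S 𝒜 ℬ ℓ hℓ h𝒜S hℬS h𝒜 hℬ y hy v hv h1 h2
    have h0' : 0 ≤ ∑ v ∈ S, y' v * (ℓ - y' v) := phi_nonneg S ℓ y' hy'.2.1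
    omega
  | succ N ih =>
    intro y hy hΦ
    by_cases hfr : ∃ v ∈ S, 0 < y v ∧ y v < ℓ
    · obtain ⟨v, hv, h1, h2⟩ := hfr
      obtain ⟨y', hy', hΦ'⟩ := step S 𝒜 ℬ ℓ hℓ h𝒜S hℬS h𝒜 hℬ y hy v hv h1 h2
      have h0' : 0 ≤ ∑ v ∈ S, y' v * (ℓ - y' v) := phi_nonneg S ℓ y' hy'.2.1
      exact ih y' hy' (by omega)
    · push_neg at hfr
      refine ⟨y, hy, ?_⟩
      intro v hv
      obtain ⟨ha, hb⟩ := hy.2.1 v hv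
      rcases lt_or_eq_of_le ha with h | h
      · exact Or.inr (le_antisymm hb (hfr v hv h))
      · exact Or.inl h.symm

end NashW

/-- **Nash-Williams' laminar family lemma.** -/
theorem laminar_lemma {α : Type*} [DecidableEq α] (S : Finset α)
    (𝒜 ℬ : Finset (Finset α))
    (h𝒜S : ∀ P ∈ 𝒜, P ⊆ S) (hℬS : ∀ P ∈ ℬ, P ⊆ S)
    (h𝒜 : ∀ P ∈ 𝒜, ∀ Q ∈ 𝒜, P ⊆ Q ∨ Q ⊆ P ∨ P ∩ Q = ∅)
    (hℬ : ∀ P ∈ ℬ, ∀ Q ∈ ℬ, P ⊆ Q ∨ Q ⊆ P ∨ P ∩ Q = ∅)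
    (ℓ : ℕ) (hℓ : 0 < ℓ) :
    ∃ A ⊆ S, ∀ P ∈ 𝒜 ∪ ℬ,
      ⌊(P.card : ℚ) / (ℓ : ℚ)⌋ ≤ ((A ∩ P).card : ℤ) ∧
      ((A ∩ P).card : ℤ) ≤ ⌈(P.card : ℚ) / (ℓ : ℚ)⌉ := by
  classical
  set y₀ : α → ℤ := fun v => if v ∈ S then 1 else 0 with hy₀def
  have hPS : ∀ P ∈ 𝒜 ∪ ℬ, P ⊆ S := by
    intro P hP
    rcases Finset.mem_union.mp hP with h | h
    · exact h𝒜S P h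
    · exact hℬS P h
  have hval : NashW.Valid S (𝒜 ∪ ℬ) ℓ y₀ := by
    refine ⟨fun v hv => by simp [hy₀def, hv], fun v hv => by simp [hy₀def, hv]; omega, ?_⟩
    intro P hP
    have hsub := hPS P hP
    have hsum : ∑ v ∈ P, y₀ v = (P.card : ℤ) := by
      rw [Finset.card_eq_sum_ones P]
      push_cast
      apply Finset.sum_congr rfl
      intro v hv
      simp [hy₀def, hsub hv]
    rw [hsum]
    constructor
    · exact_mod_cast Nat.cast_le.mpr (Nat.mul_div_le P.card ℓ)
    · have hdm := Nat.div_add_mod (P.card + ℓ - 1) ℓ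
      have hml : (P.card + ℓ - 1) % ℓ < ℓ := Nat.mod_lt _ hℓ
      have : P.card ≤ ℓ * ((P.card + ℓ - 1) / ℓ) := by omega
      exact_mod_cast this
  obtain ⟨z, hz, hint⟩ := NashW.push S 𝒜 ℬ ℓ hℓ h𝒜S hℬS h𝒜 hℬ
    (∑ v ∈ S, y₀ v * (ℓ - y₀ v)).toNat y₀ hval le_rfl
  refine ⟨S.filter (fun v => z v = ℓ), Finset.filter_subset _ _, ?_⟩
  intro P hP
  have hsub := hPS P hP
  have hAP : S.filter (fun v => z v = ℓ) ∩ P = P.filter (fun v => z v = ℓ) := by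
    ext v
    simp only [Finset.mem_inter, Finset.mem_filter]
    constructor
    · rintro ⟨⟨hs, hz⟩, hp⟩; exact ⟨hp, hz⟩
    · rintro ⟨hp, hz⟩; exact ⟨⟨hsub hp, hz⟩, hp⟩
  have hsumz : ∑ v ∈ P, z v = (ℓ : ℤ) * ((S.filter (fun v => z v = ℓ) ∩ P).card) := by
    rw [hAP]
    rw [← Finset.sum_filter_add_sum_filter_not P (fun v => z v = (ℓ:ℤ))]
    have h2 : ∑ v ∈ P.filter (fun v => ¬ z v = (ℓ:ℤ)), z v = 0 := by
      apply Finset.sum_eq_zero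
      intro v hv
      simp only [Finset.mem_filter] at hv
      rcases hint v (hsub hv.1) with h | h
      · exact h
      · exact absurd h hv.2
    have h1 : ∑ v ∈ P.filter (fun v => z v = (ℓ:ℤ)), z v
        = (ℓ : ℤ) * (P.filter (fun v => z v = (ℓ:ℤ))).card := by
      rw [Finset.sum_congr rfl (fun v hv => (Finset.mem_filter.mp hv).2)]
      simp [mul_comm]
    rw [h1, h2, add_zero]
  obtain ⟨hlo, hhi⟩ := hz.2.2 P hP
  rw [hsumz] at hlo hhi
  set c : ℕ := (S.filter (fun v => z v = ℓ) ∩ P).card with hc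
  set m : ℕ := P.card with hm
  have hclo : (ℓ * (m / ℓ) : ℤ) ≤ ℓ * c := by exact_mod_cast hlo
  have hchi : (ℓ : ℤ) * c ≤ (ℓ * ((m + ℓ - 1) / ℓ) : ℕ) := by exact_mod_cast hhi
  have hℓz : (0:ℤ) < ℓ := by exact_mod_cast hℓ
  have hlon : (m / ℓ : ℕ) ≤ c := by
    have hn : ℓ * (m / ℓ) ≤ ℓ * c := by exact_mod_cast hclo
    exact Nat.le_of_mul_le_mul_left hn hℓ
  have hhin : c ≤ ((m + ℓ - 1) / ℓ : ℕ) := by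
    have hn : ℓ * c ≤ ℓ * ((m + ℓ - 1) / ℓ) := by exact_mod_cast hchi
    exact Nat.le_of_mul_le_mul_left hn hℓ
  have hℓq : (0:ℚ) < (ℓ:ℚ) := by exact_mod_cast hℓ
  constructor
  · -- floor bound : ⌊m/ℓ⌋ ≤ c
    have hdm := Nat.div_add_mod m ℓ
    have hml : m % ℓ < ℓ := Nat.mod_lt _ hℓ
    have h1 : m < ℓ * c + ℓ := by
      have := Nat.mul_le_mul_left ℓ hlon
      omega
    have hq : (m : ℚ) / (ℓ : ℚ) < ((c : ℤ) : ℚ) + 1 := by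
      rw [div_lt_iff₀ hℓq]
      push_cast
      have : (m : ℚ) < (ℓ : ℚ) * (c : ℚ) + (ℓ : ℚ) := by exact_mod_cast h1
      linarith
    have := Int.floor_lt.mpr (show (m : ℚ) / (ℓ : ℚ) < (((c : ℤ) + 1 : ℤ) : ℚ) by push_cast; exact_mod_cast hq)
    omega
  · -- ceil bound : c ≤ ⌈m/ℓ⌉
    have hb : ℓ * ((m + ℓ - 1) / ℓ) ≤ m + ℓ - 1 := Nat.mul_div_le (m + ℓ - 1) ℓ
    have h2 : ℓ * c < m + ℓ := by
      have := Nat.mul_le_mul_left ℓ hhin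
      omega
    have hq : (((c : ℤ) - 1 : ℤ) : ℚ) < (m : ℚ) / (ℓ : ℚ) := by
      rw [lt_div_iff₀ hℓq]
      push_cast
      have : (ℓ : ℚ) * (c : ℚ) < (m : ℚ) + (ℓ : ℚ) := by exact_mod_cast h2
      nlinarith
    have := Int.lt_ceil.mpr hq
    omega
end

section
/- Let F be a k-edge-colored hypergraph in which every edge is incident with exactly three hinges, let α be a vertex of F, and let g ≥ 2 be an integer such that g ≤ 2 implies m_F(α³) = 0. Then there exists a detachment F' of F obtained by splitting α into two vertices α and v (i.e., V(F') = V(F) ∪ {v}, the hinges of F at α are partitioned between α and v in F', and all other hinges are unchanged) such that: (B1) d_{F'}(α) ≈ d_F(α)(g−1)/g; (B2) d_{F'}(v) ≈ d_F(α)/g; (B3) m_{F'}(α, w²) ≈ m_F(α, w²)(g−1)/g for each vertex w ≠ α of F; (B4) m_{F'}(v, w²) ≈ m_F(α, w²)/g for each w ≠ α; (B5) m_{F'}(α, u, w) ≈ m_F(α, u, w)(g−1)/g for every pair of distinct vertices u, w of F different from α; (B6) m_{F'}(v, u, w) ≈ m_F(α, u, w)/g for every such pair u, w; (B7) m_{F'}(v²,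 w) = 0 for each w ≠ α; (B8) m_{F'}(α, v, w) ≈ 2·m_F(α², w)/g for each w ≠ α; (B9) m_{F'}(α², w) ≈ m_F(α², w)(g−2)/g for each w ≠ α; (B10) m_{F'}(v³) = m_{F'}(v², α) = 0; (B11) m_{F'}(α³) ≈ m_F(α³)(g−3)/g; (B12) m_{F'}(v, α²) ≈ 3·m_F(α³)/g; and moreover the analogues of (B1)–(B12) hold for each color class F(j), j ∈ {1,…,k}. -/
/-- The multiset of vertices (with repetition) incident with the edge `e`,
in the hypergraph given by the hinge-to-vertex map `ψ` and the
hinge-to-edge map `φ`. -/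
def edgeVerts {V E H : Type} [Fintype H] [DecidableEq E]
    (ψ : H → V) (φ : H → E) (e : E) : Multiset V :=
  (Finset.univ.filter fun h => φ h = e).val.map ψ

/-- `mF ψ φ x y z` is the number of edges incident with exactly three hinges
whose multiset of incident vertices is `{x, y, z}`. -/
def mF {V E H : Type} [Fintype E] [Fintype H] [DecidableEq V] [DecidableEq E]
    (ψ : H → V) (φ : H → E) (x y z : V) : ℕ :=
  (Finset.univ.filter fun e => edgeVerts ψ φ e = ({x, y, z} : Multiset V)).card

/-- Colored version of `mF`: only edges of color `j` are counted. -/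
def mFc {V E H : Type} {k : ℕ} [Fintype E] [Fintype H] [DecidableEq V] [DecidableEq E]
    (ψ : H → V) (φ : H → E) (K : E → Fin k) (j : Fin k) (x y z : V) : ℕ :=
  (Finset.univ.filter fun e => K e = j ∧ edgeVerts ψ φ e = ({x, y, z} : Multiset V)).card

/-- The degree of a vertex: the number of hinges incident with it. -/
def degF {V H : Type} [Fintype H] [DecidableEq V] (ψ : H → V) (v : V) : ℕ :=
  (Finset.univ.filter fun h => ψ h = v).card

/-- The degree of a vertex in the color class `j`. -/
def degFc {V E H : Type} {k : ℕ} [Fintype H] [DecidableEq V]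
    (ψ : H → V) (φ : H → E) (K : E → Fin k) (j : Fin k) (v : V) : ℕ :=
  (Finset.univ.filter fun h => ψ h = v ∧ K (φ h) = j).card

/-- `approx a y` means `⌊y⌋ ≤ a ≤ ⌈y⌉`. -/
def approx (a : ℕ) (y : ℚ) : Prop := ⌊y⌋ ≤ (a : ℤ) ∧ (a : ℤ) ≤ ⌈y⌉


open Finset

lemma approx_congr {a : ℕ} {q q' : ℚ} (h : approx a q) (e : q = q') : approx a q' := e ▸ h

lemma approx_zero : approx 0 0 := by constructor <;> simp


open Finset

section MR0
variable {I J : Type} [Fintype I] [Fintype J] [DecidableEq I] [DecidableEq J]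

/-- number of non-integral entries -/
noncomputable def fracCount (y : I → J → ℚ) : ℕ :=
  (univ.filter (fun p : I × J => (⌊y p.1 p.2⌋ : ℚ) ≠ y p.1 p.2)).card

lemma frac_lt_of_ne {q : ℚ} (h : (⌊q⌋ : ℚ) ≠ q) : (⌊q⌋ : ℚ) < q ∧ q < (⌈q⌉ : ℚ) := by
  constructor
  · exact lt_of_le_of_ne (Int.floor_le q) h
  · rcases lt_or_eq_of_le (Int.le_ceil q) with h' | h'
    · exact h'
    · exfalso; apply h
      have : q = ((⌈q⌉ : ℤ) : ℚ) := h'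
      rw [this, Int.floor_intCast]

/-- MR0 : matrix rounding with integral row and column sums. -/
lemma MR0 (y : I → J → ℚ)
    (hr : ∀ i, ∃ z : ℤ, ∑ j, y i j = (z : ℚ))
    (hc : ∀ j, ∃ z : ℤ, ∑ i, y i j = (z : ℚ)) :
    ∃ s : I → J → ℤ,
      (∀ i j, ⌊y i j⌋ ≤ s i j ∧ s i j ≤ ⌈y i j⌉) ∧
      (∀ i, (∑ j, (s i j : ℚ)) = ∑ j, y i j) ∧
      (∀ j, (∑ i, (s i j : ℚ)) = ∑ i, y i j) := by
  suffices H : ∀ n (y : I → J → ℚ), (∀ i, ∃ z : ℤ, ∑ j, y i j = (z : ℚ)) →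
      (∀ j, ∃ z : ℤ, ∑ i, y i j = (z : ℚ)) → fracCount y ≤ n →
      ∃ s : I → J → ℤ,
      (∀ i j, ⌊y i j⌋ ≤ s i j ∧ s i j ≤ ⌈y i j⌉) ∧
      (∀ i, (∑ j, (s i j : ℚ)) = ∑ j, y i j) ∧
      (∀ j, (∑ i, (s i j : ℚ)) = ∑ i, y i j) from
    H (fracCount y) y hr hc le_rfl
  intro n
  induction n with
  | zero =>
    intro y hr hc hn
    have hall : ∀ i j, (⌊y i j⌋ : ℚ) = y i j := by
      intro i j
      by_contra hne
      have : (i, j) ∈ univ.filter (fun p : I × J => (⌊y p.1 p.2⌋ : ℚ) ≠ y p.1 p.2) := by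
        simp [hne]
      have hpos := card_pos.mpr ⟨_, this⟩
      rw [fracCount] at hn; omega
    refine ⟨fun i j => ⌊y i j⌋, fun i j => ⟨le_refl _, ?_⟩, ?_, ?_⟩
    · show ⌊y i j⌋ ≤ ⌈y i j⌉
      rw [← hall i j, Int.ceil_intCast, Int.floor_intCast]
    · intro i; exact Finset.sum_congr rfl (fun j _ => hall i j)
    · intro j; exact Finset.sum_congr rfl (fun i _ => hall i j)
  | succ n ih =>

    intro y hr hc hn
    classical
    by_cases hF : (univ.filter (fun p : I × J => (⌊y p.1 p.2⌋ : ℚ) ≠ y p.1 p.2)).Nonempty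
    swap
    · exact ih y hr hc (by
        rw [not_nonempty_iff_eq_empty] at hF
        rw [fracCount, hF]; simp)
    set F := univ.filter (fun p : I × J => (⌊y p.1 p.2⌋ : ℚ) ≠ y p.1 p.2) with hFdef
    have hmemF : ∀ p : I × J, p ∈ F ↔ (⌊y p.1 p.2⌋ : ℚ) ≠ y p.1 p.2 := by
      intro p; simp [hFdef]
    -- every row meeting F meets it twice, same for columns
    have hrowp : ∀ p ∈ F, ∃ q ∈ F, q.1 = p.1 ∧ q.2 ≠ p.2 := by
      rintro ⟨i, j⟩ hp
      by_contra hno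
      push_neg at hno
      have hint : ∀ j' ∈ univ.erase j, (⌊y i j'⌋ : ℚ) = y i j' := by
        intro j' hj'
        by_contra hne
        have hq : ((i, j') : I × J) ∈ F := (hmemF (i, j')).mpr hne
        have := hno (i, j') hq rfl
        simp only [mem_erase, mem_univ, and_true] at hj'
        exact hj' this
      obtain ⟨z, hz⟩ := hr i
      have h1 : ∑ j' ∈ univ.erase j, y i j' = ((∑ j' ∈ univ.erase j, ⌊y i j'⌋ : ℤ) : ℚ) := by
        push_cast
        exact Finset.sum_congr rfl (fun j' hj' => (hint j' hj').symm)
      have h2 : y i j + ∑ j' ∈ univ.erase j, y i j' = (z : ℚ) := by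
        rw [Finset.add_sum_erase univ (y i) (mem_univ j)]; exact hz
      have h3 : y i j = ((z - ∑ j' ∈ univ.erase j, ⌊y i j'⌋ : ℤ) : ℚ) := by
        push_cast
        rw [h1] at h2
        push_cast at h2
        linarith
      have : (⌊y i j⌋ : ℚ) = y i j := by rw [h3, Int.floor_intCast]
      exact ((hmemF (i, j)).mp hp) this
    have hcolp : ∀ p ∈ F, ∃ q ∈ F, q.2 = p.2 ∧ q.1 ≠ p.1 := by
      rintro ⟨i, j⟩ hp
      by_contra hno
      push_neg at hno
      have hint : ∀ i' ∈ univ.erase i, (⌊y i' j⌋ : ℚ) = y i' j := by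
        intro i' hi'
        by_contra hne
        have hq : ((i', j) : I × J) ∈ F := (hmemF (i', j)).mpr hne
        have := hno (i', j) hq rfl
        simp only [mem_erase, mem_univ, and_true] at hi'
        exact hi' this
      obtain ⟨z, hz⟩ := hc j
      have h1 : ∑ i' ∈ univ.erase i, y i' j = ((∑ i' ∈ univ.erase i, ⌊y i' j⌋ : ℤ) : ℚ) := by
        push_cast
        exact Finset.sum_congr rfl (fun i' hi' => (hint i' hi').symm)
      have h2 : y i j + ∑ i' ∈ univ.erase i, y i' j = (z : ℚ) := by
        rw [Finset.add_sum_erase univ (fun i' => y i' j) (mem_univ i)]; exact hz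
      have h3 : y i j = ((z - ∑ i' ∈ univ.erase i, ⌊y i' j⌋ : ℤ) : ℚ) := by
        push_cast
        rw [h1] at h2
        push_cast at h2
        linarith
      have : (⌊y i j⌋ : ℚ) = y i j := by rw [h3, Int.floor_intCast]
      exact ((hmemF (i, j)).mp hp) this
    set Rs := F.image Prod.fst with hRsdef
    set Cs := F.image Prod.snd with hCsdef
    obtain ⟨p₀, hp₀⟩ := hF
    have hj₀ : p₀.2 ∈ Cs := mem_image_of_mem _ hp₀
    set j₀ := p₀.2 with hj₀def
    set Cs' := Cs.erase j₀ with hCs'def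
    have hFR : 2 * Rs.card ≤ F.card := by
      have hfib : F.card = ∑ i ∈ Rs, (F.filter (fun p => p.1 = i)).card :=
        card_eq_sum_card_fiberwise (fun p hp => mem_image_of_mem _ hp)
      have h2le : ∀ i ∈ Rs, 2 ≤ (F.filter (fun p => p.1 = i)).card := by
        intro i hi
        obtain ⟨p, hpF, hpi⟩ := mem_image.mp hi
        obtain ⟨q, hqF, hq1, hq2⟩ := hrowp p hpF
        refine Finset.one_lt_card_iff.mpr ⟨p, q, ?_, ?_, ?_⟩
        · exact mem_filter.mpr ⟨hpF, hpi⟩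
        · exact mem_filter.mpr ⟨hqF, by rw [hq1, hpi]⟩
        · intro h; exact hq2 (by rw [h])
      calc 2 * Rs.card = ∑ _i ∈ Rs, 2 := by rw [Finset.sum_const, smul_eq_mul, mul_comm]
        _ ≤ ∑ i ∈ Rs, (F.filter (fun p => p.1 = i)).card := Finset.sum_le_sum h2le
        _ = F.card := hfib.symm
    have hFC : 2 * Cs.card ≤ F.card := by
      have hfib : F.card = ∑ j ∈ Cs, (F.filter (fun p => p.2 = j)).card :=
        card_eq_sum_card_fiberwise (fun p hp => mem_image_of_mem _ hp)
      have h2le : ∀ j ∈ Cs, 2 ≤ (F.filter (fun p => p.2 = j)).card := by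
        intro j hj
        obtain ⟨p, hpF, hpj⟩ := mem_image.mp hj
        obtain ⟨q, hqF, hq1, hq2⟩ := hcolp p hpF
        refine Finset.one_lt_card_iff.mpr ⟨p, q, ?_, ?_, ?_⟩
        · exact mem_filter.mpr ⟨hpF, hpj⟩
        · exact mem_filter.mpr ⟨hqF, by rw [hq1, hpj]⟩
        · intro h; exact hq2 (by rw [h])
      calc 2 * Cs.card = ∑ _j ∈ Cs, 2 := by rw [Finset.sum_const, smul_eq_mul, mul_comm]
        _ ≤ ∑ j ∈ Cs, (F.filter (fun p => p.2 = j)).card := Finset.sum_le_sum h2le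
        _ = F.card := hfib.symm
    have hcard : Rs.card + Cs.card ≤ F.card := by omega
    -- the linear map
    set A : Matrix ↥Rs ↥F ℚ := fun i c => if (c : I × J).1 = (i : I) then 1 else 0 with hAdef
    set B : Matrix ↥Cs' ↥F ℚ := fun j c => if (c : I × J).2 = (j : J) then 1 else 0 with hBdef
    set Φ : (↥F → ℚ) →ₗ[ℚ] ((↥Rs → ℚ) × (↥Cs' → ℚ)) :=
      (A.mulVecLin).prod (B.mulVecLin) with hΦdef
    have hnotinj : ¬ Function.Injective Φ := by
      intro hinj
      have h1 := LinearMap.finrank_le_finrank_of_injective hinj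
      rw [Module.finrank_fintype_fun_eq_card] at h1
      rw [Module.finrank_prod, Module.finrank_fintype_fun_eq_card,
        Module.finrank_fintype_fun_eq_card] at h1
      rw [Fintype.card_coe, Fintype.card_coe, Fintype.card_coe] at h1
      rw [hCs'def, card_erase_of_mem hj₀] at h1
      have hCpos : 0 < Cs.card := card_pos.mpr ⟨j₀, hj₀⟩
      omega
    rw [Function.not_injective_iff] at hnotinj
    obtain ⟨z1, z2, hz12, hnez⟩ := hnotinj
    set zf : ↥F → ℚ := z1 - z2 with hzfdef
    have hzf0 : Φ zf = 0 := by rw [hzfdef, map_sub, hz12, sub_self]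
    have hzfne : zf ≠ 0 := sub_ne_zero.mpr hnez
    have hrow0 : ∀ i : ↥Rs, ∑ c : ↥F, (if (c : I × J).1 = (i : I) then zf c else 0) = 0 := by
      intro i
      have := congrFun (congrArg Prod.fst hzf0) i
      change (Matrix.mulVec A zf) _ = 0 at this
      simpa [hAdef, Matrix.mulVec, dotProduct,
        ite_mul, one_mul, zero_mul] using this
    have hcol0 : ∀ j : ↥Cs', ∑ c : ↥F, (if (c : I × J).2 = (j : J) then zf c else 0) = 0 := by
      intro j
      have := congrFun (congrArg Prod.snd hzf0) j
      change (Matrix.mulVec B zf) _ = 0 at this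
      simpa [hBdef, Matrix.mulVec, dotProduct,
        ite_mul, one_mul, zero_mul] using this
    set zb : I × J → ℚ := fun p => if h : p ∈ F then zf ⟨p, h⟩ else 0 with hzbdef
    have hzb0 : ∀ p ∉ F, zb p = 0 := by intro p hp; rw [hzbdef]; exact dif_neg hp
    -- rewriting sums over rows/cols as sums over F
    have hsum_row : ∀ i : I, ∑ j : J, zb (i, j) = ∑ c : ↥F, (if (c : I × J).1 = i then zf c else 0) := by
      intro i
      have e1 : ∑ c : ↥F, (if (c : I × J).1 = i then zf c else 0)
          = ∑ p ∈ F, (if p.1 = i then zb p else 0) := by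
        rw [← Finset.sum_attach F (fun p => if p.1 = i then zb p else 0), Finset.univ_eq_attach]
        refine Finset.sum_congr rfl (fun c _ => ?_)
        by_cases h : (c : I × J).1 = i
        · simp only [if_pos h, hzbdef]; rw [dif_pos c.2]
        · rw [if_neg h, if_neg h]
      have e2 : ∑ p ∈ univ.filter (fun p : I × J => p.1 = i), zb p = ∑ j : J, zb (i, j) := by
        rw [Finset.sum_filter, Fintype.sum_prod_type]
        rw [Finset.sum_eq_single i]
        · simp
        · intro b _ hb
          refine Finset.sum_eq_zero (fun j _ => ?_)
          simp [hb]
        · intro h; exact absurd (mem_univ i) h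
      have e3 : ∑ p ∈ univ.filter (fun p : I × J => p.1 = i), zb p
          = ∑ p ∈ F, (if p.1 = i then zb p else 0) := by
        rw [← Finset.sum_filter]
        refine (Finset.sum_subset ?_ ?_).symm
        · intro p hp; simp only [mem_filter] at hp ⊢; exact ⟨mem_univ _, hp.2⟩
        · intro p hp hnp
          simp only [mem_filter] at hp hnp
          exact hzb0 p (fun hpF => hnp ⟨hpF, hp.2⟩)
      rw [e1, ← e3, e2]
    have hsum_col : ∀ j : J, ∑ i : I, zb (i, j) = ∑ c : ↥F, (if (c : I × J).2 = j then zf c else 0) := by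
      intro j
      have e1 : ∑ c : ↥F, (if (c : I × J).2 = j then zf c else 0)
          = ∑ p ∈ F, (if p.2 = j then zb p else 0) := by
        rw [← Finset.sum_attach F (fun p => if p.2 = j then zb p else 0), Finset.univ_eq_attach]
        refine Finset.sum_congr rfl (fun c _ => ?_)
        by_cases h : (c : I × J).2 = j
        · simp only [if_pos h, hzbdef]; rw [dif_pos c.2]
        · rw [if_neg h, if_neg h]
      have e2 : ∑ p ∈ univ.filter (fun p : I × J => p.2 = j), zb p = ∑ i : I, zb (i, j) := by
        rw [Finset.sum_filter, Fintype.sum_prod_type_right]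
        rw [Finset.sum_eq_single j]
        · simp
        · intro b _ hb
          refine Finset.sum_eq_zero (fun i _ => ?_)
          simp [hb]
        · intro h; exact absurd (mem_univ j) h
      have e3 : ∑ p ∈ univ.filter (fun p : I × J => p.2 = j), zb p
          = ∑ p ∈ F, (if p.2 = j then zb p else 0) := by
        rw [← Finset.sum_filter]
        refine (Finset.sum_subset ?_ ?_).symm
        · intro p hp; simp only [mem_filter] at hp ⊢; exact ⟨mem_univ _, hp.2⟩
        · intro p hp hnp
          simp only [mem_filter] at hp hnp
          exact hzb0 p (fun hpF => hnp ⟨hpF, hp.2⟩)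
      rw [e1, ← e3, e2]
    have hzrow : ∀ i : I, ∑ j : J, zb (i, j) = 0 := by
      intro i
      rw [hsum_row i]
      by_cases hi : i ∈ Rs
      · exact hrow0 ⟨i, hi⟩
      · refine Finset.sum_eq_zero (fun c _ => ?_)
        rw [if_neg]
        intro h; exact hi (h ▸ mem_image_of_mem Prod.fst c.2)
    have hzcol' : ∀ j : J, j ≠ j₀ → ∑ i : I, zb (i, j) = 0 := by
      intro j hj
      rw [hsum_col j]
      by_cases hjc : j ∈ Cs
      · exact hcol0 ⟨j, mem_erase.mpr ⟨hj, hjc⟩⟩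
      · refine Finset.sum_eq_zero (fun c _ => ?_)
        rw [if_neg]
        intro h; exact hjc (h ▸ mem_image_of_mem Prod.snd c.2)
    have hzcol : ∀ j : J, ∑ i : I, zb (i, j) = 0 := by
      intro j
      by_cases hj : j = j₀
      · have h0 : ∑ i : I, ∑ j' : J, zb (i, j') = 0 := Finset.sum_eq_zero (fun i _ => hzrow i)
        rw [Finset.sum_comm] at h0
        rw [← Finset.add_sum_erase univ (fun j' => ∑ i, zb (i, j')) (mem_univ j)] at h0
        have hrest : ∑ j' ∈ univ.erase j, ∑ i, zb (i, j') = 0 :=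
          Finset.sum_eq_zero (fun j' hj' => hzcol' j' (by
            have h5 := (mem_erase.mp hj').1
            rw [hj] at h5
            exact h5))
        rw [hrest, add_zero] at h0
        exact h0
      · exact hzcol' j hj
    -- support and epsilon
    set S := univ.filter (fun p : I × J => zb p ≠ 0) with hSdef
    have hSF : ∀ p ∈ S, p ∈ F := by
      intro p hp
      by_contra hpF
      exact (mem_filter.mp hp).2 (hzb0 p hpF)
    have hSne : S.Nonempty := by
      rw [Function.ne_iff] at hzfne
      obtain ⟨c, hc0⟩ := hzfne
      refine ⟨(c : I × J), mem_filter.mpr ⟨mem_univ _, ?_⟩⟩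
      simp only [hzbdef]
      rw [dif_pos c.2]
      simpa using hc0
    set εf : I × J → ℚ := fun p =>
      if 0 < zb p then ((⌈y p.1 p.2⌉ : ℚ) - y p.1 p.2) / zb p
      else (y p.1 p.2 - (⌊y p.1 p.2⌋ : ℚ)) / (- zb p) with hεfdef
    set ε := S.inf' hSne εf with hεdef
    have hεpos : 0 < ε := by
      rw [hεdef, Finset.lt_inf'_iff]
      intro p hp
      have hpF := hSF p hp
      have hfr := frac_lt_of_ne ((hmemF p).mp hpF)
      have hzbne : zb p ≠ 0 := (mem_filter.mp hp).2
      simp only [hεfdef]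
      by_cases hzbpos : 0 < zb p
      · rw [if_pos hzbpos]
        exact div_pos (by linarith [hfr.2]) hzbpos
      · rw [if_neg hzbpos]
        have : zb p < 0 := lt_of_le_of_ne (le_of_not_gt hzbpos) hzbne
        exact div_pos (by linarith [hfr.1]) (by linarith)
    set y' : I → J → ℚ := fun i j => y i j + ε * zb (i, j) with hy'def
    have hbound : ∀ i j, (⌊y i j⌋ : ℚ) ≤ y' i j ∧ y' i j ≤ (⌈y i j⌉ : ℚ) := by
      intro i j
      rcases lt_trichotomy (zb (i, j)) 0 with hneg | hzero | hpos
      · have hpS : (i, j) ∈ S := mem_filter.mpr ⟨mem_univ _, ne_of_lt hneg⟩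
        have hle := Finset.inf'_le εf hpS
        rw [← hεdef] at hle
        simp only [hεfdef] at hle
        simp only [not_lt.mpr (le_of_lt hneg), if_neg (not_lt.mpr (le_of_lt hneg))] at hle
        have h2 : ε * (- zb (i, j)) ≤ y i j - (⌊y i j⌋ : ℚ) := by
          rw [← le_div_iff₀ (by linarith)]
          exact hle
        constructor
        · rw [hy'def]; simp only []; nlinarith
        · rw [hy'def]; simp only []
          have : ε * zb (i, j) ≤ 0 := mul_nonpos_of_nonneg_of_nonpos (le_of_lt hεpos) (le_of_lt hneg)
          linarith [Int.le_ceil (y i j)]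
      · rw [hy'def]; simp only [hzero, mul_zero, add_zero]
        exact ⟨Int.floor_le _, Int.le_ceil _⟩
      · have hpS : (i, j) ∈ S := mem_filter.mpr ⟨mem_univ _, ne_of_gt hpos⟩
        have hle := Finset.inf'_le εf hpS
        rw [← hεdef] at hle
        simp only [hεfdef] at hle
        simp only [if_pos hpos] at hle
        have h2 : ε * zb (i, j) ≤ (⌈y i j⌉ : ℚ) - y i j := by
          rw [← le_div_iff₀ hpos]
          exact hle
        constructor
        · rw [hy'def]; simp only []
          have : 0 ≤ ε * zb (i, j) := mul_nonneg (le_of_lt hεpos) (le_of_lt hpos)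
          linarith [Int.floor_le (y i j)]
        · rw [hy'def]; simp only []; linarith
    have hr' : ∀ i, ∑ j, y' i j = ∑ j, y i j := by
      intro i
      rw [hy'def]
      simp only []
      rw [Finset.sum_add_distrib, ← Finset.mul_sum, hzrow i, mul_zero, add_zero]
    have hc' : ∀ j, ∑ i, y' i j = ∑ i, y i j := by
      intro j
      rw [hy'def]
      simp only []
      rw [Finset.sum_add_distrib, ← Finset.mul_sum, hzcol j, mul_zero, add_zero]
    -- fracCount decreases
    obtain ⟨q₀, hq₀S, hεeq⟩ := Finset.exists_mem_eq_inf' hSne εf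
    have hq₀int : (⌊y' q₀.1 q₀.2⌋ : ℚ) = y' q₀.1 q₀.2 := by
      have hzbne : zb q₀ ≠ 0 := (mem_filter.mp hq₀S).2
      by_cases hzbpos : 0 < zb q₀
      · have heq : y' q₀.1 q₀.2 = (⌈y q₀.1 q₀.2⌉ : ℚ) := by
          simp only [hy'def, Prod.mk.eta]
          rw [hεdef, hεeq]; simp only [hεfdef]
          simp only [if_pos hzbpos]
          rw [div_mul_cancel₀ _ hzbne]
          ring
        rw [heq, Int.floor_intCast]
      · have hmul : (y q₀.1 q₀.2 - (⌊y q₀.1 q₀.2⌋ : ℚ)) / (- zb q₀) * zb q₀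
            = - (y q₀.1 q₀.2 - (⌊y q₀.1 q₀.2⌋ : ℚ)) := by
          rw [div_mul_eq_mul_div, div_eq_iff (neg_ne_zero.mpr hzbne)]
          ring
        have heq : y' q₀.1 q₀.2 = (⌊y q₀.1 q₀.2⌋ : ℚ) := by
          simp only [hy'def, Prod.mk.eta]
          rw [hεdef, hεeq]; simp only [hεfdef]
          simp only [if_neg hzbpos]
          rw [hmul]
          ring
        rw [heq, Int.floor_intCast]
    have hfrac' : fracCount y' ≤ n := by
      have hsub : (univ.filter (fun p : I × J => (⌊y' p.1 p.2⌋ : ℚ) ≠ y' p.1 p.2)) ⊆ F.erase q₀ := by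
        intro p hp
        have hp' : (⌊y' p.1 p.2⌋ : ℚ) ≠ y' p.1 p.2 := (mem_filter.mp hp).2
        refine mem_erase.mpr ⟨?_, ?_⟩
        · intro h; exact hp' (h ▸ hq₀int)
        · by_contra hpF
          have hzb : zb p = 0 := hzb0 p hpF
          have hyint : (⌊y p.1 p.2⌋ : ℚ) = y p.1 p.2 := by
            by_contra hne
            exact hpF ((hmemF p).mpr hne)
          apply hp'
          have : y' p.1 p.2 = y p.1 p.2 := by
            simp only [hy'def, Prod.mk.eta]
            rw [hzb, mul_zero, add_zero]
          rw [this, ← hyint, Int.floor_intCast]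
      have h1 : (univ.filter (fun p : I × J => (⌊y' p.1 p.2⌋ : ℚ) ≠ y' p.1 p.2)).card ≤ (F.erase q₀).card :=
        card_le_card hsub
      have h2 : (F.erase q₀).card = F.card - 1 := card_erase_of_mem (hSF q₀ hq₀S)
      have h3 : F.card ≤ n + 1 := by rw [fracCount, ← hFdef] at hn; exact hn
      have h4 : 0 < F.card := card_pos.mpr ⟨q₀, hSF q₀ hq₀S⟩
      rw [fracCount]
      omega
    obtain ⟨s, hs1, hs2, hs3⟩ := ih y' (fun i => (hr' i) ▸ hr i) (fun j => (hc' j) ▸ hc j) hfrac'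
    refine ⟨s, fun i j => ⟨?_, ?_⟩, fun i => ?_, fun j => ?_⟩
    · exact le_trans (Int.le_floor.mpr (hbound i j).1) (hs1 i j).1
    · exact le_trans (hs1 i j).2 (Int.ceil_le.mpr (hbound i j).2)
    · rw [hs2 i, hr' i]
    · rw [hs3 j, hc' j]

lemma floor_intCast_sub (n : ℤ) (q : ℚ) : ⌊(n : ℚ) - q⌋ = n - ⌈q⌉ := by
  rw [sub_eq_neg_add, Int.floor_add_intCast, Int.floor_neg, neg_add_eq_sub]

lemma ceil_intCast_sub (n : ℤ) (q : ℚ) : ⌈(n : ℚ) - q⌉ = n - ⌊q⌋ := by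
  rw [sub_eq_neg_add, Int.ceil_add_intCast, Int.ceil_neg, neg_add_eq_sub]


/-- Full matrix rounding: entries, row sums, column sums and the total. -/
lemma MRfull {I J : Type} [Fintype I] [Fintype J] [DecidableEq I] [DecidableEq J]
    (y : I → J → ℚ) (hy : ∀ i j, 0 ≤ y i j) :
    ∃ s : I → J → ℕ,
      (∀ i j, approx (s i j) (y i j)) ∧
      (∀ i, approx (∑ j, s i j) (∑ j, y i j)) ∧
      (∀ j, approx (∑ i, s i j) (∑ i, y i j)) ∧
      approx (∑ i, ∑ j, s i j) (∑ i, ∑ j, y i j) := by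
  classical
  set r : I → ℚ := fun i => ∑ j, y i j with hrdef
  set c : J → ℚ := fun j => ∑ i, y i j with hcdef
  set x : ℚ := ∑ j, ((⌈c j⌉ : ℚ) - c j) with hxdef
  set T : ℚ := ∑ i, ∑ j, y i j with hTdef
  have hcT : ∑ j, c j = T := by rw [hcdef, hTdef, Finset.sum_comm]
  have hrT : ∑ i, r i = T := rfl
  have hxT : ∑ j, (⌈c j⌉ : ℚ) = x + T := by rw [hxdef, Finset.sum_sub_distrib, hcT]; ring
  set Y : Option I → Option J → ℚ := fun oi oj =>
    match oi, oj with
    | some i, some j => y i j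
    | some _i, none => (⌈r _i⌉ : ℚ) - r _i
    | none, some _j => (⌈c _j⌉ : ℚ) - c _j
    | none, none => (⌈x⌉ : ℚ) - x
    with hYdef
  have hY1 : ∀ i j, Y (some i) (some j) = y i j := fun _ _ => rfl
  have hY2 : ∀ i, Y (some i) none = (⌈r i⌉ : ℚ) - r i := fun _ => rfl
  have hY3 : ∀ j, Y none (some j) = (⌈c j⌉ : ℚ) - c j := fun _ => rfl
  have hY4 : Y none none = (⌈x⌉ : ℚ) - x := rfl
  have hrow : ∀ oi, ∃ z : ℤ, ∑ oj, Y oi oj = (z : ℚ) := by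
    rintro (_ | i)
    · refine ⟨⌈x⌉, ?_⟩
      rw [Fintype.sum_option, hY4]
      have : ∑ oj : J, Y none (some oj) = x :=
        (Finset.sum_congr rfl (fun j _ => hY3 j)).trans hxdef.symm
      rw [this]; ring
    · refine ⟨⌈r i⌉, ?_⟩
      rw [Fintype.sum_option, hY2]
      have : ∑ oj : J, Y (some i) (some oj) = r i :=
        (Finset.sum_congr rfl (fun j _ => hY1 i j)).trans rfl
      rw [this]; ring
  have hcol : ∀ oj, ∃ z : ℤ, ∑ oi, Y oi oj = (z : ℚ) := by
    rintro (_ | j)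
    · refine ⟨⌈x⌉ + ∑ i, ⌈r i⌉ - ∑ j, ⌈c j⌉, ?_⟩
      rw [Fintype.sum_option, hY4]
      have h1 : ∑ oi : I, Y (some oi) none = ∑ i, ((⌈r i⌉ : ℚ) - r i) :=
        Finset.sum_congr rfl (fun i _ => hY2 i)
      rw [h1, Finset.sum_sub_distrib, hrT]
      push_cast
      rw [hxT]
      ring
    · refine ⟨⌈c j⌉, ?_⟩
      rw [Fintype.sum_option, hY3]
      have : ∑ oi : I, Y (some oi) (some j) = c j :=
        (Finset.sum_congr rfl (fun i _ => hY1 i j)).trans rfl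
      rw [this]; ring
  obtain ⟨S, hS1, hS2, hS3⟩ := MR0 Y hrow hcol
  -- the integer sums (cast down the rational equalities)
  have hS2' : ∀ (oi : Option I) (z : ℤ), (∑ oj, Y oi oj = (z : ℚ)) → ∑ oj, S oi oj = z := by
    intro oi z hz
    have := hS2 oi
    rw [hz] at this
    exact_mod_cast this
  have hS3' : ∀ (oj : Option J) (z : ℤ), (∑ oi, Y oi oj = (z : ℚ)) → ∑ oi, S oi oj = z := by
    intro oj z hz
    have := hS3 oj
    rw [hz] at this
    exact_mod_cast this
  have hSnn : ∀ i j, 0 ≤ S (some i) (some j) := by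
    intro i j
    refine le_trans ?_ (hS1 (some i) (some j)).1
    rw [hY1]
    exact Int.floor_nonneg.mpr (hy i j)
  set s : I → J → ℕ := fun i j => (S (some i) (some j)).toNat with hsdef
  have hcast : ∀ i j, ((s i j : ℤ)) = S (some i) (some j) := by
    intro i j; rw [hsdef]; exact Int.toNat_of_nonneg (hSnn i j)
  have hsum_cast : ∀ i, ((∑ j, s i j : ℕ) : ℤ) = ∑ j, S (some i) (some j) := by
    intro i; push_cast; exact Finset.sum_congr rfl (fun j _ => hcast i j)
  have hsum_cast' : ∀ j, ((∑ i, s i j : ℕ) : ℤ) = ∑ i, S (some i) (some j) := by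
    intro j; push_cast; exact Finset.sum_congr rfl (fun i _ => hcast i j)
  -- row sums of s
  have hrowsum : ∀ i, ∑ j, S (some i) (some j) = ⌈r i⌉ - S (some i) none := by
    intro i
    have h0 : ∑ oj, Y (some i) oj = ((⌈r i⌉ : ℤ) : ℚ) := by
      rw [Fintype.sum_option, hY2]
      have : ∑ oj : J, Y (some i) (some oj) = r i :=
        (Finset.sum_congr rfl (fun j _ => hY1 i j)).trans rfl
      rw [this]; push_cast; try ring
    have h6 := hS2' (some i) ⌈r i⌉ h0
    simp only [Fintype.sum_option] at h6
    omega
  have hcolsum : ∀ j, ∑ i, S (some i) (some j) = ⌈c j⌉ - S none (some j) := by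
    intro j
    have h0 : ∑ oi, Y oi (some j) = ((⌈c j⌉ : ℤ) : ℚ) := by
      rw [Fintype.sum_option, hY3]
      have : ∑ oi : I, Y (some oi) (some j) = c j :=
        (Finset.sum_congr rfl (fun i _ => hY1 i j)).trans rfl
      rw [this]; push_cast; try ring
    have := hS3' (some j) ⌈c j⌉ h0
    simp only [Fintype.sum_option] at this
    omega
  have hbnd_rnone : ∀ i, 0 ≤ S (some i) none ∧ S (some i) none ≤ ⌈r i⌉ - ⌊r i⌋ := by
    intro i
    have h := hS1 (some i) none
    rw [hY2] at h
    rw [floor_intCast_sub, ceil_intCast_sub] at h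
    omega
  have hbnd_cnone : ∀ j, 0 ≤ S none (some j) ∧ S none (some j) ≤ ⌈c j⌉ - ⌊c j⌋ := by
    intro j
    have h := hS1 none (some j)
    rw [hY3] at h
    rw [floor_intCast_sub, ceil_intCast_sub] at h
    omega
  refine ⟨s, ?_, ?_, ?_, ?_⟩
  · intro i j
    have h := hS1 (some i) (some j)
    rw [hY1] at h
    exact ⟨by rw [hcast i j]; exact h.1, by rw [hcast i j]; exact h.2⟩
  · intro i
    have hfl : ⌊∑ j, y i j⌋ = ⌊r i⌋ := rfl
    have hce : ⌈∑ j, y i j⌉ = ⌈r i⌉ := rfl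
    constructor
    · rw [hsum_cast i, hrowsum i, hfl]
      have := (hbnd_rnone i).2
      omega
    · rw [hsum_cast i, hrowsum i, hce]
      have := (hbnd_rnone i).1
      omega
  · intro j
    have hfl : ⌊∑ i, y i j⌋ = ⌊c j⌋ := rfl
    have hce : ⌈∑ i, y i j⌉ = ⌈c j⌉ := rfl
    constructor
    · rw [hsum_cast' j, hcolsum j, hfl]
      have := (hbnd_cnone j).2
      omega
    · rw [hsum_cast' j, hcolsum j, hce]
      have := (hbnd_cnone j).1
      omega
  · -- total
    have htotZ : ((∑ i, ∑ j, s i j : ℕ) : ℤ) = ∑ j, ⌈c j⌉ - ⌈x⌉ + S none none := by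
      have h1 : ((∑ i, ∑ j, s i j : ℕ) : ℤ) = ∑ i, ∑ j, S (some i) (some j) := by
        push_cast
        exact Finset.sum_congr rfl (fun i _ => Finset.sum_congr rfl (fun j _ => hcast i j))
      rw [h1]
      have h2 : ∑ i, ∑ j, S (some i) (some j) = ∑ j, ∑ i, S (some i) (some j) := Finset.sum_comm
      rw [h2]
      have h3 : ∑ j, ∑ i, S (some i) (some j) = ∑ j, (⌈c j⌉ - S none (some j)) :=
        Finset.sum_congr rfl (fun j _ => hcolsum j)
      rw [h3, Finset.sum_sub_distrib]
      -- need : ∑ j, S none (some j) = ⌈x⌉ - S none none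
      have h0 : ∑ oj, Y none oj = ((⌈x⌉ : ℤ) : ℚ) := by
        rw [Fintype.sum_option, hY4]
        have : ∑ oj : J, Y none (some oj) = x :=
          (Finset.sum_congr rfl (fun j _ => hY3 j)).trans hxdef.symm
        rw [this]; push_cast; try ring
      have h4 := hS2' none ⌈x⌉ h0
      simp only [Fintype.sum_option] at h4
      omega
    have hSnn_bnd : 0 ≤ S none none ∧ S none none ≤ ⌈x⌉ - ⌊x⌋ := by
      have h := hS1 none none
      rw [hY4] at h
      rw [floor_intCast_sub, ceil_intCast_sub] at h
      omega
    constructor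
    · -- ⌊T⌋ ≤ total
      rw [htotZ]
      have hq : ((∑ j, ⌈c j⌉ - ⌈x⌉ + S none none : ℤ) : ℚ) > T - 1 := by
        push_cast
        rw [hxT]
        have := hSnn_bnd.1
        have hxc := Int.ceil_lt_add_one x
        have : ((S none none : ℤ) : ℚ) ≥ 0 := by exact_mod_cast this
        linarith
      have hfl : ((⌊T⌋ : ℤ) : ℚ) ≤ T := Int.floor_le T
      have : ((⌊T⌋ : ℤ) : ℚ) < ((∑ j, ⌈c j⌉ - ⌈x⌉ + S none none : ℤ) : ℚ) + 1 := by linarith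
      have := lt_of_lt_of_le this (le_refl _)
      exact_mod_cast by
        have h5 : ((⌊T⌋ : ℤ) : ℚ) < ((∑ j, ⌈c j⌉ - ⌈x⌉ + S none none + 1 : ℤ) : ℚ) := by
          push_cast; push_cast at this; linarith
        have h6 : ⌊T⌋ < ∑ j, ⌈c j⌉ - ⌈x⌉ + S none none + 1 := by exact_mod_cast h5
        omega
    · rw [htotZ]
      have hq : ((∑ j, ⌈c j⌉ - ⌈x⌉ + S none none : ℤ) : ℚ) < T + 1 := by
        push_cast
        rw [hxT]
        have h7 := hSnn_bnd.2
        have h8 : ((S none none : ℤ) : ℚ) ≤ ((⌈x⌉ - ⌊x⌋ : ℤ) : ℚ) := by exact_mod_cast h7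
        push_cast at h8
        have hxf := Int.floor_le x
        have hxf2 := Int.lt_floor_add_one x
        linarith
      have hcl : T ≤ ((⌈T⌉ : ℤ) : ℚ) := Int.le_ceil T
      have h9 : ((∑ j, ⌈c j⌉ - ⌈x⌉ + S none none : ℤ) : ℚ) < ((⌈T⌉ : ℤ) : ℚ) + 1 := by linarith
      have h10 : ∑ j, ⌈c j⌉ - ⌈x⌉ + S none none < ⌈T⌉ + 1 := by exact_mod_cast h9
      omega

lemma approx_compl {a b : ℕ} {q : ℚ} (hle : a ≤ b) (h : approx a q) : approx (b - a) ((b : ℚ) - q) := by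
  obtain ⟨h1, h2⟩ := h
  have hb : ((b : ℕ) : ℚ) = (((b : ℕ) : ℤ) : ℚ) := by push_cast; ring
  constructor
  · rw [hb, floor_intCast_sub]
    omega
  · rw [hb, ceil_intCast_sub]
    omega

lemma ksum {V E H : Type} [Fintype E] [Fintype H] [DecidableEq V] [DecidableEq E] [DecidableEq H]
    (ψ : H → V) (φ : H → E) (α : V) (s : Finset E) :
    (Finset.univ.filter (fun h => ψ h = α ∧ φ h ∈ s)).card
      = ∑ e ∈ s, (edgeVerts ψ φ e).count α := by
  rw [Finset.card_eq_sum_card_fiberwise (f := φ) (t := s)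
    (fun h hh => (Finset.mem_filter.mp hh).2.2)]
  refine Finset.sum_congr rfl (fun e he => ?_)
  have h1 : (Finset.univ.filter (fun h => ψ h = α ∧ φ h ∈ s)).filter (fun h => φ h = e)
      = (Finset.univ.filter (fun h => φ h = e)).filter (fun h => α = ψ h) := by
    ext h
    simp only [Finset.mem_filter, Finset.mem_univ, true_and]
    constructor
    · rintro ⟨⟨ha, _⟩, hb⟩; exact ⟨hb, ha.symm⟩
    · rintro ⟨hb, ha⟩; exact ⟨⟨ha.symm, hb ▸ he⟩, hb⟩
  rw [h1, edgeVerts, Multiset.count_map]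
  rfl
/-- **One detachment step.**
`F` is given by `ψ : H → V`, the surjection `φ : H → E`, every edge having
exactly three hinges, with a `k`-edge-coloring `K`.  Given a vertex `α` and
an integer `g ≥ 2` such that `g ≤ 2 → m_F(α³) = 0`, the vertex `α` can be
split into two vertices `α` (here `some α`) and `v` (here `none`), giving a
detachment `F'` with hinge-to-vertex map `ψ' : H → Option V` satisfying
(B1)–(B12) together with their colored analogues. -/
theorem detachment_step {V E H : Type} [Fintype E] [Fintype H]
    [DecidableEq V] [DecidableEq E]
    (ψ : H → V) (φ : H → E) (hφ : Function.Surjective φ)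
    (h3 : ∀ e : E, (Finset.univ.filter fun h => φ h = e).card = 3)
    (k : ℕ) (K : E → Fin k)
    (α : V) (g : ℕ) (hg : 2 ≤ g)
    (hgα : g ≤ 2 → mF ψ φ α α α = 0) :
    ∃ ψ' : H → Option V,
      -- `F'` is a detachment of `F` splitting `α` into `some α` and `none`:
      (∀ h : H, ψ' h = some (ψ h) ∨ (ψ h = α ∧ ψ' h = none)) ∧
      -- (B1)
      approx (degF ψ' (some α)) ((degF ψ α : ℚ) * ((g : ℚ) - 1) / (g : ℚ)) ∧
      -- (B2)
      approx (degF ψ' none) ((degF ψ α : ℚ) / (g : ℚ)) ∧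
      -- (B3)
      (∀ w : V, w ≠ α →
        approx (mF ψ' φ (some α) (some w) (some w))
          ((mF ψ φ α w w : ℚ) * ((g : ℚ) - 1) / (g : ℚ))) ∧
      -- (B4)
      (∀ w : V, w ≠ α →
        approx (mF ψ' φ none (some w) (some w)) ((mF ψ φ α w w : ℚ) / (g : ℚ))) ∧
      -- (B5)
      (∀ u w : V, u ≠ α → w ≠ α → u ≠ w →
        approx (mF ψ' φ (some α) (some u) (some w))
          ((mF ψ φ α u w : ℚ) * ((g : ℚ) - 1) / (g : ℚ))) ∧
      -- (B6)
      (∀ u w : V, u ≠ α → w ≠ α → u ≠ w →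
        approx (mF ψ' φ none (some u) (some w)) ((mF ψ φ α u w : ℚ) / (g : ℚ))) ∧
      -- (B7)
      (∀ w : V, w ≠ α → mF ψ' φ none none (some w) = 0) ∧
      -- (B8)
      (∀ w : V, w ≠ α →
        approx (mF ψ' φ (some α) none (some w))
          (2 * (mF ψ φ α α w : ℚ) / (g : ℚ))) ∧
      -- (B9)
      (∀ w : V, w ≠ α →
        approx (mF ψ' φ (some α) (some α) (some w))
          ((mF ψ φ α α w : ℚ) * ((g : ℚ) - 2) / (g : ℚ))) ∧
      -- (B10)
      (mF ψ' φ none none none = 0 ∧ mF ψ' φ none none (some α) = 0) ∧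
      -- (B11)
      approx (mF ψ' φ (some α) (some α) (some α))
        ((mF ψ φ α α α : ℚ) * ((g : ℚ) - 3) / (g : ℚ)) ∧
      -- (B12)
      approx (mF ψ' φ none (some α) (some α)) (3 * (mF ψ φ α α α : ℚ) / (g : ℚ)) ∧
      -- colored analogues of (B1)–(B12) for each color class `j`
      (∀ j : Fin k,
        approx (degFc ψ' φ K j (some α))
          ((degFc ψ φ K j α : ℚ) * ((g : ℚ) - 1) / (g : ℚ)) ∧
        approx (degFc ψ' φ K j none) ((degFc ψ φ K j α : ℚ) / (g : ℚ)) ∧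
        (∀ w : V, w ≠ α →
          approx (mFc ψ' φ K j (some α) (some w) (some w))
            ((mFc ψ φ K j α w w : ℚ) * ((g : ℚ) - 1) / (g : ℚ))) ∧
        (∀ w : V, w ≠ α →
          approx (mFc ψ' φ K j none (some w) (some w))
            ((mFc ψ φ K j α w w : ℚ) / (g : ℚ))) ∧
        (∀ u w : V, u ≠ α → w ≠ α → u ≠ w →
          approx (mFc ψ' φ K j (some α) (some u) (some w))
            ((mFc ψ φ K j α u w : ℚ) * ((g : ℚ) - 1) / (g : ℚ))) ∧
        (∀ u w : V, u ≠ α → w ≠ α → u ≠ w →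
          approx (mFc ψ' φ K j none (some u) (some w))
            ((mFc ψ φ K j α u w : ℚ) / (g : ℚ))) ∧
        (∀ w : V, w ≠ α → mFc ψ' φ K j none none (some w) = 0) ∧
        (∀ w : V, w ≠ α →
          approx (mFc ψ' φ K j (some α) none (some w))
            (2 * (mFc ψ φ K j α α w : ℚ) / (g : ℚ))) ∧
        (∀ w : V, w ≠ α →
          approx (mFc ψ' φ K j (some α) (some α) (some w))
            ((mFc ψ φ K j α α w : ℚ) * ((g : ℚ) - 2) / (g : ℚ))) ∧
        (mFc ψ' φ K j none none none = 0 ∧ mFc ψ' φ K j none none (some α) = 0) ∧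
        approx (mFc ψ' φ K j (some α) (some α) (some α))
          ((mFc ψ φ K j α α α : ℚ) * ((g : ℚ) - 3) / (g : ℚ)) ∧
        approx (mFc ψ' φ K j none (some α) (some α))
          (3 * (mFc ψ φ K j α α α : ℚ) / (g : ℚ))) := by
  classical
  have hgpos : 0 < g := by omega
  have hgQ : (0:ℚ) < (g:ℚ) := by exact_mod_cast hgpos
  have hgne : (g:ℚ) ≠ 0 := ne_of_gt hgQ
  have hevT : ∀ e : E, edgeVerts ψ φ e ∈ Finset.univ.image (fun e' => edgeVerts ψ φ e') :=
    fun e => mem_image_of_mem _ (mem_univ e)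
  set T : Finset (Multiset V) := Finset.univ.image (fun e' => edgeVerts ψ φ e') with hTdef
  have hcard3 : ∀ e : E, Multiset.card (edgeVerts ψ φ e) = 3 := by
    intro e
    rw [edgeVerts, Multiset.card_map]
    exact h3 e
  obtain ⟨s, hs_cell0, hs_row0, hs_col0, hs_tot0⟩ :=
    MRfull (fun (μ : ↥T) (j : Fin k) =>
      (((univ.filter (fun e => K e = j ∧ edgeVerts ψ φ e = (↑μ : Multiset V))).card
          * Multiset.count α (↑μ : Multiset V) : ℕ) : ℚ) / (g:ℚ))
      (fun μ j => by positivity)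
  have hs_cell : ∀ (μ : ↥T) (j : Fin k), approx (s μ j)
      ((((univ.filter (fun e => K e = j ∧ edgeVerts ψ φ e = (↑μ : Multiset V))).card
          * Multiset.count α (↑μ : Multiset V) : ℕ) : ℚ) / (g:ℚ)) := hs_cell0
  have hs_row : ∀ (μ : ↥T), approx (∑ j, s μ j)
      (∑ j, (((univ.filter (fun e => K e = j ∧ edgeVerts ψ φ e = (↑μ : Multiset V))).card
          * Multiset.count α (↑μ : Multiset V) : ℕ) : ℚ) / (g:ℚ)) := hs_row0
  have hs_col : ∀ (j : Fin k), approx (∑ μ : ↥T, s μ j)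
      (∑ μ : ↥T, (((univ.filter (fun e => K e = j ∧ edgeVerts ψ φ e = (↑μ : Multiset V))).card
          * Multiset.count α (↑μ : Multiset V) : ℕ) : ℚ) / (g:ℚ)) := hs_col0
  have hs_tot : approx (∑ μ : ↥T, ∑ j, s μ j)
      (∑ μ : ↥T, ∑ j, (((univ.filter (fun e => K e = j ∧ edgeVerts ψ φ e = (↑μ : Multiset V))).card
          * Multiset.count α (↑μ : Multiset V) : ℕ) : ℚ) / (g:ℚ)) := hs_tot0
  clear hs_cell0 hs_row0 hs_col0 hs_tot0
  -- s is at most the cell size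
  have hsle : ∀ (μ : ↥T) (j : Fin k),
      s μ j ≤ (univ.filter (fun e => K e = j ∧ edgeVerts ψ φ e = (↑μ : Multiset V))).card := by
    intro μ j
    have hkey : ((((univ.filter (fun e => K e = j ∧ edgeVerts ψ φ e = (↑μ : Multiset V))).card
          * Multiset.count α (↑μ : Multiset V) : ℕ) : ℚ) / (g:ℚ))
          ≤ (((univ.filter (fun e => K e = j ∧ edgeVerts ψ φ e = (↑μ : Multiset V))).card : ℕ) : ℚ)
        → s μ j ≤ (univ.filter (fun e => K e = j ∧ edgeVerts ψ φ e = (↑μ : Multiset V))).card := by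
      intro hq
      have h2 := (hs_cell μ j).2
      have h3 : (⌈(((univ.filter (fun e => K e = j ∧ edgeVerts ψ φ e = (↑μ : Multiset V))).card
          * Multiset.count α (↑μ : Multiset V) : ℕ) : ℚ) / (g:ℚ)⌉ : ℤ)
          ≤ ((univ.filter (fun e => K e = j ∧ edgeVerts ψ φ e = (↑μ : Multiset V))).card : ℤ) := by
        rw [Int.ceil_le]
        push_cast
        push_cast at hq
        exact hq
      omega
    by_cases hr : Multiset.count α (↑μ : Multiset V) ≤ g
    · apply hkey
      rw [div_le_iff₀ hgQ]
      push_cast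
      have := Nat.mul_le_mul_left
        ((univ.filter (fun e => K e = j ∧ edgeVerts ψ φ e = (↑μ : Multiset V))).card) hr
      exact_mod_cast this
    · have hcardμ : Multiset.card (↑μ : Multiset V) = 3 := by
        obtain ⟨e, -, hev⟩ := Finset.mem_image.mp μ.2
        rw [← hev]
        exact hcard3 e
      have hrle : Multiset.count α (↑μ : Multiset V) ≤ 3 := by
        have := Multiset.count_le_card α (↑μ : Multiset V)
        omega
      have hr3 : Multiset.count α (↑μ : Multiset V) = 3 := by omega
      have hμα : (↑μ : Multiset V) = ({α, α, α} : Multiset V) := by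
        have hrep : (↑μ : Multiset V) = Multiset.replicate 3 α := by
          rw [Multiset.eq_replicate]
          refine ⟨hcardμ, ?_⟩
          have hcc : Multiset.count α (↑μ : Multiset V) = Multiset.card (↑μ : Multiset V) := by omega
          exact fun b hb => (Multiset.count_eq_card.mp hcc b hb).symm
        rw [hrep]
        simp [Multiset.replicate_succ]
      have hmz : mF ψ φ α α α = 0 := hgα (by omega)
      have hn0 : (univ.filter (fun e => K e = j ∧ edgeVerts ψ φ e = (↑μ : Multiset V))).card = 0 := by
        have hsub2 : univ.filter (fun e => K e = j ∧ edgeVerts ψ φ e = (↑μ : Multiset V))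
            ⊆ univ.filter (fun e => edgeVerts ψ φ e = ({α, α, α} : Multiset V)) := by
          intro e he
          rw [mem_filter] at he ⊢
          refine ⟨mem_univ _, ?_⟩
          rw [← hμα]
          exact he.2.2
        have hle := Finset.card_le_card hsub2
        have he2 : (univ.filter (fun e => edgeVerts ψ φ e = ({α, α, α} : Multiset V))).card
            = mF ψ φ α α α := rfl
        omega
      rw [hn0]
      have h2 := (hs_cell μ j).2
      rw [hn0] at h2
      rw [Nat.zero_mul, Nat.cast_zero, zero_div] at h2
      have h3 : (⌈(0:ℚ)⌉ : ℤ) = 0 := Int.ceil_zero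
      omega
  have hchoice : ∀ (μ : ↥T) (j : Fin k),
      ∃ t ⊆ univ.filter (fun e => K e = j ∧ edgeVerts ψ φ e = (↑μ : Multiset V)), t.card = s μ j :=
    fun μ j => Finset.exists_subset_card_eq (hsle μ j)
  choose Mc hMc1 hMc2 using hchoice
  set M : Finset E := univ.filter (fun e => e ∈ Mc ⟨edgeVerts ψ φ e, hevT e⟩ (K e)) with hMdef
  have hMcell : ∀ (μ : ↥T) (j : Fin k),
      M.filter (fun e => K e = j ∧ edgeVerts ψ φ e = (↑μ : Multiset V)) = Mc μ j := by
    intro μ j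
    ext e
    constructor
    · intro he
      rw [mem_filter] at he
      obtain ⟨heM, hK, hev⟩ := he
      rw [hMdef, mem_filter] at heM
      have hsub : (⟨edgeVerts ψ φ e, hevT e⟩ : ↥T) = μ := Subtype.ext hev
      rw [hsub, hK] at heM
      exact heM.2
    · intro he
      have h1 := hMc1 μ j he
      rw [mem_filter] at h1
      rw [mem_filter]
      refine ⟨?_, h1.2⟩
      rw [hMdef, mem_filter]
      refine ⟨mem_univ e, ?_⟩
      have hsub : (⟨edgeVerts ψ φ e, hevT e⟩ : ↥T) = μ := Subtype.ext h1.2.2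
      rw [hsub, h1.2.1]
      exact he
  have hMα : ∀ e ∈ M, ∃ h : H, φ h = e ∧ ψ h = α := by
    intro e heM
    rw [hMdef, mem_filter] at heM
    have hin := heM.2
    by_cases hcz : Multiset.count α (edgeVerts ψ φ e) = 0
    · exfalso
      have happ : approx (s ⟨edgeVerts ψ φ e, hevT e⟩ (K e))
          ((((univ.filter (fun e' => K e' = K e ∧ edgeVerts ψ φ e' = edgeVerts ψ φ e)).card
              * Multiset.count α (edgeVerts ψ φ e) : ℕ) : ℚ) / (g:ℚ)) :=
        hs_cell ⟨edgeVerts ψ φ e, hevT e⟩ (K e)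
      rw [hcz, Nat.mul_zero, Nat.cast_zero, zero_div] at happ
      have h1 : s ⟨edgeVerts ψ φ e, hevT e⟩ (K e) = 0 := by
        have h2 := happ.2
        have h3 : (⌈(0:ℚ)⌉ : ℤ) = 0 := Int.ceil_zero
        omega
      have h2 : Mc ⟨edgeVerts ψ φ e, hevT e⟩ (K e) = ∅ :=
        Finset.card_eq_zero.mp (by rw [hMc2]; exact h1)
      rw [h2] at hin
      exact absurd hin (Finset.notMem_empty e)
    · have hpos : 0 < Multiset.count α (edgeVerts ψ φ e) := Nat.pos_of_ne_zero hcz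
      have hmem : α ∈ edgeVerts ψ φ e := Multiset.count_pos.mp hpos
      rw [edgeVerts] at hmem
      obtain ⟨h, hh, hψh⟩ := Multiset.mem_map.mp hmem
      rw [Finset.mem_val, mem_filter] at hh
      exact ⟨h, hh.2, hψh⟩
  have hselex : ∀ e : E, ∃ h : H, (e ∈ M → (φ h = e ∧ ψ h = α)) := by
    intro e
    by_cases he : e ∈ M
    · obtain ⟨h, h1, h2⟩ := hMα e he
      exact ⟨h, fun _ => ⟨h1, h2⟩⟩
    · obtain ⟨h, _⟩ := hφ e
      exact ⟨h, fun hc => absurd hc he⟩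
  choose sel hsel using hselex
  set ψ' : H → Option V := fun h => if φ h ∈ M ∧ h = sel (φ h) then none else some (ψ h) with hψ'def
  have P1 : ∀ h : H, ψ' h = none ↔ (φ h ∈ M ∧ h = sel (φ h)) := by
    intro h
    constructor
    · intro hn
      by_contra hc
      rw [hψ'def] at hn
      simp only [if_neg hc] at hn
      exact Option.some_ne_none _ hn
    · intro hc
      rw [hψ'def]
      simp only [if_pos hc]
  have P2 : ∀ h : H, ψ' h = some (ψ h) ∨ (ψ h = α ∧ ψ' h = none) := by
    intro h
    by_cases hc : φ h ∈ M ∧ h = sel (φ h)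
    · right
      refine ⟨?_, (P1 h).mpr hc⟩
      have := (hsel (φ h) hc.1).2
      rw [← hc.2] at this
      exact this
    · left
      rw [hψ'def]
      simp [hc]
  have P3a : ∀ e ∉ M, edgeVerts ψ' φ e = (edgeVerts ψ φ e).map some := by
    intro e heM
    rw [edgeVerts, edgeVerts, Multiset.map_map]
    refine Multiset.map_congr rfl ?_
    intro h hh
    rw [Finset.mem_val, mem_filter] at hh
    rw [hψ'def]
    simp only []
    rw [if_neg]
    · rfl
    · rintro ⟨hM, -⟩
      rw [hh.2] at hM
      exact heM hM
  have P3b : ∀ e ∈ M, ∃ t : Multiset V,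
      edgeVerts ψ φ e = α ::ₘ t ∧ edgeVerts ψ' φ e = none ::ₘ t.map some := by
    intro e heM
    obtain ⟨hφ0, hψ0⟩ := hsel e heM
    have hmem : sel e ∈ (univ.filter (fun h => φ h = e)).val := by
      rw [Finset.mem_val, mem_filter]
      exact ⟨mem_univ _, hφ0⟩
    have hcons : (univ.filter (fun h => φ h = e)).val
        = sel e ::ₘ ((univ.filter (fun h => φ h = e)).val.erase (sel e)) :=
      (Multiset.cons_erase hmem).symm
    refine ⟨((univ.filter (fun h => φ h = e)).val.erase (sel e)).map ψ, ?_, ?_⟩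
    · rw [edgeVerts]
      conv_lhs => rw [hcons]
      rw [Multiset.map_cons, hψ0]
    · rw [edgeVerts]
      conv_lhs => rw [hcons]
      rw [Multiset.map_cons]
      congr 1
      · rw [hψ'def]
        simp only []
        rw [if_pos]
        exact ⟨by rw [hφ0]; exact heM, by rw [hφ0]⟩
      · rw [Multiset.map_map]
        refine Multiset.map_congr rfl ?_
        intro h hh
        have hnd : ((univ.filter (fun h => φ h = e)).val).Nodup := (univ.filter _).nodup
        rw [hnd.mem_erase_iff] at hh
        obtain ⟨hne, hmem2⟩ := hh
        rw [Finset.mem_val, mem_filter] at hmem2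
        rw [hψ'def]
        simp only []
        rw [if_neg]
        · rfl
        · rintro ⟨-, hEq⟩
          rw [hmem2.2] at hEq
          exact hne hEq
  have I1 : ∀ (e : E) (w : Multiset V),
      edgeVerts ψ' φ e = w.map some ↔ (e ∉ M ∧ edgeVerts ψ φ e = w) := by
    intro e w
    constructor
    · intro hE
      by_cases heM : e ∈ M
      · exfalso
        obtain ⟨t, -, h2⟩ := P3b e heM
        rw [h2] at hE
        have hmem : (none : Option V) ∈ w.map some := by
          rw [← hE]
          exact Multiset.mem_cons_self _ _
        simp at hmem
      · exact ⟨heM, Multiset.map_injective (Option.some_injective V)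
          (by rw [← P3a e heM, hE])⟩
    · rintro ⟨heM, hev⟩
      rw [P3a e heM, hev]
  have I2 : ∀ (e : E) (w : Multiset V),
      edgeVerts ψ' φ e = none ::ₘ w.map some ↔ (e ∈ M ∧ edgeVerts ψ φ e = α ::ₘ w) := by
    intro e w
    constructor
    · intro hE
      by_cases heM : e ∈ M
      · obtain ⟨t, h1, h2⟩ := P3b e heM
        rw [h2] at hE
        have ht : t = w := Multiset.map_injective (Option.some_injective V)
          ((Multiset.cons_inj_right _).mp hE)
        exact ⟨heM, by rw [h1, ht]⟩
      · exfalso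
        rw [P3a e heM] at hE
        have hmem : (none : Option V) ∈ (edgeVerts ψ φ e).map some := by
          rw [hE]
          exact Multiset.mem_cons_self _ _
        simp at hmem
    · rintro ⟨heM, hev⟩
      obtain ⟨t, h1, h2⟩ := P3b e heM
      rw [hev] at h1
      have ht : t = w := (Multiset.cons_inj_right _).mp h1.symm
      rw [h2, ht]
  have I3 : ∀ e : E, (edgeVerts ψ' φ e).count none ≤ 1 := by
    intro e
    by_cases heM : e ∈ M
    · obtain ⟨t, -, h2⟩ := P3b e heM
      rw [h2, Multiset.count_cons_self]
      have hz : (t.map some).count none = 0 := by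
        rw [Multiset.count_eq_zero]
        simp
      omega
    · rw [P3a e heM]
      have hz : ((edgeVerts ψ φ e).map some).count none = 0 := by
        rw [Multiset.count_eq_zero]
        simp
      omega
  -- counting: moved cells
  have C2 : ∀ (μ : Multiset V) (j : Fin k),
      (M.filter (fun e => K e = j ∧ edgeVerts ψ φ e = μ)).card
        = if hμ : μ ∈ T then s ⟨μ, hμ⟩ j else 0 := by
    intro μ j
    by_cases hμ : μ ∈ T
    · rw [dif_pos hμ]
      have h := hMcell ⟨μ, hμ⟩ j
      have h2 := hMc2 ⟨μ, hμ⟩ j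
      calc (M.filter (fun e => K e = j ∧ edgeVerts ψ φ e = μ)).card
          = (Mc ⟨μ, hμ⟩ j).card := by rw [← h]
        _ = s ⟨μ, hμ⟩ j := h2
    · rw [dif_neg hμ, Finset.card_eq_zero]
      refine Finset.filter_eq_empty_iff.mpr (fun e _ => ?_)
      rintro ⟨-, hev⟩
      exact hμ (hev ▸ hevT e)
  have C1 : ∀ μ : Multiset V, (M.filter (fun e => edgeVerts ψ φ e = μ)).card
      = ∑ j, (M.filter (fun e => K e = j ∧ edgeVerts ψ φ e = μ)).card := by
    intro μ
    rw [Finset.card_eq_sum_card_fiberwise (f := K) (t := univ) (fun e _ => mem_univ (K e))]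
    refine Finset.sum_congr rfl (fun j _ => ?_)
    congr 1
    ext e
    simp only [mem_filter]
    tauto
  have C4 : ∀ j : Fin k, (M.filter (fun e => K e = j)).card = ∑ μ : ↥T, s μ j := by
    intro j
    rw [Finset.card_eq_sum_card_fiberwise
      (f := fun e => (⟨edgeVerts ψ φ e, hevT e⟩ : ↥T)) (t := univ) (fun e _ => mem_univ _)]
    refine Finset.sum_congr rfl (fun μ _ => ?_)
    have hfe : (M.filter (fun e => K e = j)).filter
        (fun e => (⟨edgeVerts ψ φ e, hevT e⟩ : ↥T) = μ)
        = M.filter (fun e => K e = j ∧ edgeVerts ψ φ e = (↑μ : Multiset V)) := by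
      ext e
      simp only [mem_filter]
      constructor
      · rintro ⟨⟨h1, h2⟩, h3⟩
        exact ⟨h1, h2, congrArg Subtype.val h3⟩
      · rintro ⟨h1, h2, h3⟩
        exact ⟨⟨h1, h2⟩, Subtype.ext h3⟩
    rw [hfe, hMcell μ j, hMc2]
  have C3 : M.card = ∑ μ : ↥T, ∑ j, s μ j := by
    rw [Finset.card_eq_sum_card_fiberwise (f := K) (t := univ) (fun e _ => mem_univ _)]
    have h1 : ∑ j, (M.filter (fun e => K e = j)).card = ∑ j, ∑ μ : ↥T, s μ j :=
      Finset.sum_congr rfl (fun j _ => C4 j)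
    rw [h1, Finset.sum_comm]
  -- sums of counts
  have Scol : ∀ j : Fin k, degFc ψ φ K j α
      = ∑ μ : ↥T, (univ.filter (fun e => K e = j ∧ edgeVerts ψ φ e = (↑μ : Multiset V))).card
          * Multiset.count α (↑μ : Multiset V) := by
    intro j
    haveI : DecidableEq H := Classical.decEq H
    have h1 : degFc ψ φ K j α
        = (univ.filter (fun h => ψ h = α ∧ φ h ∈ univ.filter (fun e => K e = j))).card := by
      have h0 : degFc ψ φ K j α = (univ.filter (fun h => ψ h = α ∧ K (φ h) = j)).card := rfl
      rw [h0]
      congr 1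
      ext h
      simp only [mem_filter, mem_univ, true_and]
    rw [h1, ksum ψ φ α]
    rw [← Finset.sum_fiberwise_of_maps_to
      (g := fun e => (⟨edgeVerts ψ φ e, hevT e⟩ : ↥T)) (t := univ)
      (fun e _ => mem_univ _) (fun e => (edgeVerts ψ φ e).count α)]
    refine Finset.sum_congr rfl (fun μ _ => ?_)
    have hfe : (univ.filter (fun e => K e = j)).filter
        (fun e => (⟨edgeVerts ψ φ e, hevT e⟩ : ↥T) = μ)
        = univ.filter (fun e => K e = j ∧ edgeVerts ψ φ e = (↑μ : Multiset V)) := by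
      ext e
      simp only [mem_filter, mem_univ, true_and]
      constructor
      · rintro ⟨h1, h2⟩
        exact ⟨h1, congrArg Subtype.val h2⟩
      · rintro ⟨h1, h2⟩
        exact ⟨h1, Subtype.ext h2⟩
    rw [hfe]
    calc ∑ e ∈ univ.filter (fun e => K e = j ∧ edgeVerts ψ φ e = (↑μ : Multiset V)),
          (edgeVerts ψ φ e).count α
        = ∑ _e ∈ univ.filter (fun e => K e = j ∧ edgeVerts ψ φ e = (↑μ : Multiset V)),
          Multiset.count α (↑μ : Multiset V) :=
        Finset.sum_congr rfl (fun e he => by rw [(mem_filter.mp he).2.2])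
      _ = (univ.filter (fun e => K e = j ∧ edgeVerts ψ φ e = (↑μ : Multiset V))).card
          * Multiset.count α (↑μ : Multiset V) := by
        rw [Finset.sum_const, smul_eq_mul]
  have Stot : degF ψ α = ∑ j, degFc ψ φ K j α := by
    have h0 : degF ψ α = (univ.filter (fun h => ψ h = α)).card := rfl
    rw [h0, Finset.card_eq_sum_card_fiberwise
      (f := fun h => K (φ h)) (t := univ) (fun h _ => mem_univ _)]
    refine Finset.sum_congr rfl (fun j _ => ?_)
    have h2 : degFc ψ φ K j α = (univ.filter (fun h => ψ h = α ∧ K (φ h) = j)).card := rfl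
    rw [h2]
    congr 1
    ext h
    simp only [mem_filter, mem_univ, true_and]
  have Srow : ∀ μ : Multiset V, (univ.filter (fun e => edgeVerts ψ φ e = μ)).card
      = ∑ j, (univ.filter (fun e => K e = j ∧ edgeVerts ψ φ e = μ)).card := by
    intro μ
    rw [Finset.card_eq_sum_card_fiberwise (f := K) (t := univ) (fun e _ => mem_univ (K e))]
    refine Finset.sum_congr rfl (fun j _ => ?_)
    congr 1
    ext e
    simp only [mem_filter, mem_univ, true_and]
    tauto
  have hntT : ∀ μ : Multiset V, μ ∉ T → (univ.filter (fun e => edgeVerts ψ φ e = μ)).card = 0 := by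
    intro μ hμ
    rw [Finset.card_eq_zero]
    refine Finset.filter_eq_empty_iff.mpr (fun e _ => ?_)
    intro hE
    exact hμ (hE ▸ hevT e)
  -- R lemmas : approximations for the moved counts
  have R2 : ∀ (μ : Multiset V) (j : Fin k),
      approx ((M.filter (fun e => K e = j ∧ edgeVerts ψ φ e = μ)).card)
        ((((univ.filter (fun e => K e = j ∧ edgeVerts ψ φ e = μ)).card
            * Multiset.count α μ : ℕ) : ℚ) / (g:ℚ)) := by
    intro μ j
    have hcc := C2 μ j
    by_cases hμ : μ ∈ T
    · rw [dif_pos hμ] at hcc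
      rw [hcc]
      exact hs_cell ⟨μ, hμ⟩ j
    · rw [dif_neg hμ] at hcc
      rw [hcc]
      have hn2 : (univ.filter (fun e => K e = j ∧ edgeVerts ψ φ e = μ)).card = 0 := by
        rw [Finset.card_eq_zero]
        refine Finset.filter_eq_empty_iff.mpr (fun e _ => ?_)
        rintro ⟨-, hev⟩
        exact hμ (hev ▸ hevT e)
      rw [hn2, Nat.zero_mul, Nat.cast_zero, zero_div]
      exact approx_zero
  have R1 : ∀ μ : Multiset V,
      approx ((M.filter (fun e => edgeVerts ψ φ e = μ)).card)
        ((((univ.filter (fun e => edgeVerts ψ φ e = μ)).card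
            * Multiset.count α μ : ℕ) : ℚ) / (g:ℚ)) := by
    intro μ
    rw [C1 μ]
    by_cases hμ : μ ∈ T
    · have happ : approx (∑ j, s ⟨μ, hμ⟩ j)
          (∑ j, (((univ.filter (fun e => K e = j ∧ edgeVerts ψ φ e = μ)).card
              * Multiset.count α μ : ℕ) : ℚ) / (g:ℚ)) := hs_row ⟨μ, hμ⟩
      have h1 : ∑ j, (M.filter (fun e => K e = j ∧ edgeVerts ψ φ e = μ)).card
          = ∑ j, s ⟨μ, hμ⟩ j :=
        Finset.sum_congr rfl (fun j _ => by rw [C2 μ j, dif_pos hμ])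
      rw [h1]
      refine approx_congr happ ?_
      rw [← Finset.sum_div]
      congr 1
      rw [Srow μ]
      push_cast
      rw [Finset.sum_mul]
    · have h1 : ∑ j, (M.filter (fun e => K e = j ∧ edgeVerts ψ φ e = μ)).card = 0 := by
        refine Finset.sum_eq_zero (fun j _ => ?_)
        have hcc := C2 μ j
        rw [dif_neg hμ] at hcc
        exact hcc
      rw [h1, hntT μ hμ, Nat.zero_mul, Nat.cast_zero, zero_div]
      exact approx_zero
  have Rle1 : ∀ μ : Multiset V, (M.filter (fun e => edgeVerts ψ φ e = μ)).card
      ≤ (univ.filter (fun e => edgeVerts ψ φ e = μ)).card := by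
    intro μ
    refine Finset.card_le_card (fun e he => ?_)
    rw [mem_filter] at he ⊢
    exact ⟨mem_univ e, he.2⟩
  have Rle2 : ∀ (μ : Multiset V) (j : Fin k),
      (M.filter (fun e => K e = j ∧ edgeVerts ψ φ e = μ)).card
      ≤ (univ.filter (fun e => K e = j ∧ edgeVerts ψ φ e = μ)).card := by
    intro μ j
    refine Finset.card_le_card (fun e he => ?_)
    rw [mem_filter] at he ⊢
    exact ⟨mem_univ e, he.2⟩
  have R4 : ∀ j : Fin k, approx ((M.filter (fun e => K e = j)).card) ((degFc ψ φ K j α : ℚ) / (g:ℚ)) := by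
    intro j
    rw [C4 j]
    refine approx_congr (hs_col j) ?_
    rw [← Finset.sum_div]
    congr 1
    rw [Scol j]
    push_cast
    rfl
  have R3 : approx M.card ((degF ψ α : ℚ) / (g:ℚ)) := by
    rw [C3]
    refine approx_congr hs_tot ?_
    have h1 : ((degF ψ α : ℕ) : ℚ)
        = ∑ j, ∑ μ : ↥T, (((univ.filter
            (fun e => K e = j ∧ edgeVerts ψ φ e = (↑μ : Multiset V))).card
            * Multiset.count α (↑μ : Multiset V) : ℕ) : ℚ) := by
      rw [Stot]
      push_cast
      refine Finset.sum_congr rfl (fun j _ => ?_)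
      rw [Scol j]
      push_cast
      rfl
    rw [h1]
    simp only [Finset.sum_div]
    exact Finset.sum_comm
  -- degree identities
  have D1 : degF ψ' none = M.card := by
    have him : univ.filter (fun h => ψ' h = none) = M.image sel := by
      ext h
      simp only [mem_filter, mem_univ, true_and, Finset.mem_image]
      constructor
      · intro hn
        obtain ⟨hM, hs⟩ := (P1 h).mp hn
        exact ⟨φ h, hM, hs.symm⟩
      · rintro ⟨e, heM, rfl⟩
        refine (P1 _).mpr ⟨?_, ?_⟩
        · rw [(hsel e heM).1]
          exact heM
        · rw [(hsel e heM).1]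
    have hinj : Set.InjOn sel ↑M := by
      intro e1 h1 e2 h2 hEq
      have he1 := (hsel e1 (Finset.mem_coe.mp h1)).1
      have he2 := (hsel e2 (Finset.mem_coe.mp h2)).1
      rw [← he1, ← he2, hEq]
    have : degF ψ' none = (univ.filter (fun h => ψ' h = none)).card := rfl
    rw [this, him]
    exact Finset.card_image_of_injOn hinj
  have D2 : ∀ j : Fin k, degFc ψ' φ K j none = (M.filter (fun e => K e = j)).card := by
    intro j
    have him : univ.filter (fun h => ψ' h = none ∧ K (φ h) = j)
        = (M.filter (fun e => K e = j)).image sel := by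
      ext h
      simp only [mem_filter, mem_univ, true_and, Finset.mem_image]
      constructor
      · rintro ⟨hn, hK⟩
        obtain ⟨hM, hs⟩ := (P1 h).mp hn
        exact ⟨φ h, ⟨hM, hK⟩, hs.symm⟩
      · rintro ⟨e, ⟨heM, hK⟩, rfl⟩
        refine ⟨(P1 _).mpr ⟨?_, ?_⟩, ?_⟩
        · rw [(hsel e heM).1]
          exact heM
        · rw [(hsel e heM).1]
        · rw [(hsel e heM).1]
          exact hK
    have hinj : Set.InjOn sel ↑(M.filter (fun e => K e = j)) := by
      intro e1 h1 e2 h2 hEq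
      have hm1 := Finset.mem_of_mem_filter e1 (Finset.mem_coe.mp h1)
      have hm2 := Finset.mem_of_mem_filter e2 (Finset.mem_coe.mp h2)
      have he1 := (hsel e1 hm1).1
      have he2 := (hsel e2 hm2).1
      rw [← he1, ← he2, hEq]
    have hd : degFc ψ' φ K j none = (univ.filter (fun h => ψ' h = none ∧ K (φ h) = j)).card := rfl
    rw [hd, him]
    exact Finset.card_image_of_injOn hinj
  have Dsub : ∀ h : H, ψ' h = none → ψ h = α := by
    intro h hn
    rcases P2 h with h1 | h1
    · rw [hn] at h1; exact absurd h1.symm (Option.some_ne_none _)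
    · exact h1.1
  have D3 : degF ψ' (some α) = degF ψ α - M.card := by
    have hsubn : univ.filter (fun h => ψ' h = none) ⊆ univ.filter (fun h => ψ h = α) := by
      intro h hh
      rw [mem_filter] at hh ⊢
      exact ⟨mem_univ _, Dsub h hh.2⟩
    have hset : univ.filter (fun h => ψ' h = some α)
        = univ.filter (fun h => ψ h = α) \ univ.filter (fun h => ψ' h = none) := by
      ext h
      simp only [mem_filter, mem_sdiff, mem_univ, true_and]
      constructor
      · intro hs
        rcases P2 h with h1 | h1
        · refine ⟨Option.some_inj.mp (h1.symm.trans hs), ?_⟩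
          rw [hs]
          simp
        · rw [h1.2] at hs
          exact absurd hs (by simp)
      · rintro ⟨hα, hn⟩
        rcases P2 h with h1 | h1
        · rw [h1, hα]
        · exact absurd h1.2 hn
    have e0 : degF ψ' (some α) = (univ.filter (fun h => ψ' h = some α)).card := rfl
    have e1 : (univ.filter (fun h => ψ h = α)).card = degF ψ α := rfl
    have e2 : (univ.filter (fun h => ψ' h = none)).card = degF ψ' none := rfl
    rw [e0, hset, Finset.card_sdiff_of_subset hsubn, e1, e2, D1]
  have D4 : ∀ j : Fin k, degFc ψ' φ K j (some α)
      = degFc ψ φ K j α - (M.filter (fun e => K e = j)).card := by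
    intro j
    have hsubn : univ.filter (fun h => ψ' h = none ∧ K (φ h) = j)
        ⊆ univ.filter (fun h => ψ h = α ∧ K (φ h) = j) := by
      intro h hh
      rw [mem_filter] at hh ⊢
      exact ⟨mem_univ _, Dsub h hh.2.1, hh.2.2⟩
    have hset : univ.filter (fun h => ψ' h = some α ∧ K (φ h) = j)
        = univ.filter (fun h => ψ h = α ∧ K (φ h) = j)
          \ univ.filter (fun h => ψ' h = none ∧ K (φ h) = j) := by
      ext h
      simp only [mem_filter, mem_sdiff, mem_univ, true_and]
      constructor
      · rintro ⟨hs, hK⟩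
        rcases P2 h with h1 | h1
        · refine ⟨⟨Option.some_inj.mp (h1.symm.trans hs), hK⟩, ?_⟩
          rintro ⟨hn, -⟩
          rw [hs] at hn
          exact Option.some_ne_none _ hn
        · rw [h1.2] at hs
          exact absurd hs (by simp)
      · rintro ⟨⟨hα, hK⟩, hn⟩
        rcases P2 h with h1 | h1
        · rw [h1, hα]
          exact ⟨rfl, hK⟩
        · exact absurd ⟨h1.2, hK⟩ hn
    have e0 : degFc ψ' φ K j (some α)
        = (univ.filter (fun h => ψ' h = some α ∧ K (φ h) = j)).card := rfl
    have e1 : (univ.filter (fun h => ψ h = α ∧ K (φ h) = j)).card = degFc ψ φ K j α := rfl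
    have e2 : (univ.filter (fun h => ψ' h = none ∧ K (φ h) = j)).card = degFc ψ' φ K j none := rfl
    rw [e0, hset, Finset.card_sdiff_of_subset hsubn, e1, e2, D2 j]
  have Rle3 : M.card ≤ degF ψ α := by
    rw [← D1]
    have hsubn : univ.filter (fun h => ψ' h = none) ⊆ univ.filter (fun h => ψ h = α) := by
      intro h hh
      rw [mem_filter] at hh ⊢
      exact ⟨mem_univ _, Dsub h hh.2⟩
    exact Finset.card_le_card hsubn
  have Rle4 : ∀ j : Fin k, (M.filter (fun e => K e = j)).card ≤ degFc ψ φ K j α := by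
    intro j
    rw [← D2 j]
    have hsubn : univ.filter (fun h => ψ' h = none ∧ K (φ h) = j)
        ⊆ univ.filter (fun h => ψ h = α ∧ K (φ h) = j) := by
      intro h hh
      rw [mem_filter] at hh ⊢
      exact ⟨mem_univ _, Dsub h hh.2.1, hh.2.2⟩
    exact Finset.card_le_card hsubn
  -- counting identities for edge types
  have U1 : ∀ w : Multiset V,
      (univ.filter (fun e => edgeVerts ψ' φ e = w.map some)).card
        = (univ.filter (fun e => edgeVerts ψ φ e = w)).card
          - (M.filter (fun e => edgeVerts ψ φ e = w)).card := by
    intro w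
    have hset : univ.filter (fun e => edgeVerts ψ' φ e = w.map some)
        = univ.filter (fun e => edgeVerts ψ φ e = w) \ M.filter (fun e => edgeVerts ψ φ e = w) := by
      ext e
      simp only [mem_filter, mem_sdiff, mem_univ, true_and]
      rw [I1 e w]
      constructor
      · rintro ⟨hM, hev⟩
        exact ⟨hev, fun hc => hM hc.1⟩
      · rintro ⟨hev, hnc⟩
        exact ⟨fun hM => hnc ⟨hM, hev⟩, hev⟩
    rw [hset, Finset.card_sdiff_of_subset]
    intro e he
    rw [mem_filter] at he ⊢
    exact ⟨mem_univ _, he.2⟩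
  have U2 : ∀ w : Multiset V,
      (univ.filter (fun e => edgeVerts ψ' φ e = none ::ₘ w.map some)).card
        = (M.filter (fun e => edgeVerts ψ φ e = α ::ₘ w)).card := by
    intro w
    have hset : univ.filter (fun e => edgeVerts ψ' φ e = none ::ₘ w.map some)
        = M.filter (fun e => edgeVerts ψ φ e = α ::ₘ w) := by
      ext e
      simp only [mem_filter, mem_univ, true_and]
      exact I2 e w
    rw [hset]
  have U1c : ∀ (w : Multiset V) (j : Fin k),
      (univ.filter (fun e => K e = j ∧ edgeVerts ψ' φ e = w.map some)).card
        = (univ.filter (fun e => K e = j ∧ edgeVerts ψ φ e = w)).card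
          - (M.filter (fun e => K e = j ∧ edgeVerts ψ φ e = w)).card := by
    intro w j
    have hset : univ.filter (fun e => K e = j ∧ edgeVerts ψ' φ e = w.map some)
        = univ.filter (fun e => K e = j ∧ edgeVerts ψ φ e = w)
          \ M.filter (fun e => K e = j ∧ edgeVerts ψ φ e = w) := by
      ext e
      simp only [mem_filter, mem_sdiff, mem_univ, true_and]
      rw [I1 e w]
      constructor
      · rintro ⟨hK, hM, hev⟩
        exact ⟨⟨hK, hev⟩, fun hc => hM hc.1⟩
      · rintro ⟨⟨hK, hev⟩, hnc⟩
        exact ⟨hK, fun hM => hnc ⟨hM, hK, hev⟩, hev⟩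
    rw [hset, Finset.card_sdiff_of_subset]
    intro e he
    rw [mem_filter] at he ⊢
    exact ⟨mem_univ _, he.2⟩
  have U2c : ∀ (w : Multiset V) (j : Fin k),
      (univ.filter (fun e => K e = j ∧ edgeVerts ψ' φ e = none ::ₘ w.map some)).card
        = (M.filter (fun e => K e = j ∧ edgeVerts ψ φ e = α ::ₘ w)).card := by
    intro w j
    have hset : univ.filter (fun e => K e = j ∧ edgeVerts ψ' φ e = none ::ₘ w.map some)
        = M.filter (fun e => K e = j ∧ edgeVerts ψ φ e = α ::ₘ w) := by
      ext e
      simp only [mem_filter, mem_univ, true_and]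
      rw [I2 e w]
      constructor
      · rintro ⟨hK, hM, hev⟩
        exact ⟨hM, hK, hev⟩
      · rintro ⟨hM, hK, hev⟩
        exact ⟨hK, hM, hev⟩
    rw [hset]
  -- multiset helpers
  have hmap3 : ∀ a b c : V, (({a, b, c} : Multiset V)).map some
      = ({some a, some b, some c} : Multiset (Option V)) := by
    intro a b c; simp
  have hmap2 : ∀ b c : V, none ::ₘ (({b, c} : Multiset V)).map some
      = ({none, some b, some c} : Multiset (Option V)) := by
    intro b c; simp [Multiset.insert_eq_cons]
  have hmap2' : ∀ b c : V, none ::ₘ (({b, c} : Multiset V)).map some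
      = ({some b, none, some c} : Multiset (Option V)) := by
    intro b c
    rw [hmap2]
    rw [Multiset.insert_eq_cons, Multiset.insert_eq_cons, Multiset.insert_eq_cons,
      Multiset.insert_eq_cons]
    exact (Multiset.cons_swap _ _ _).symm
  have hconsmk : ∀ b c : V, (α ::ₘ ({b, c} : Multiset V)) = ({α, b, c} : Multiset V) :=
    fun b c => (Multiset.insert_eq_cons _ _).symm
  have hc1 : ∀ u w : V, u ≠ α → w ≠ α → Multiset.count α ({α, u, w} : Multiset V) = 1 := by
    intro u w hu hw
    simp [Multiset.insert_eq_cons, Multiset.count_cons, Ne.symm hu, Ne.symm hw]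
  have hc2 : ∀ w : V, w ≠ α → Multiset.count α ({α, α, w} : Multiset V) = 2 := by
    intro w hw
    simp [Multiset.insert_eq_cons, Multiset.count_cons, Ne.symm hw]
  have hc3 : Multiset.count α ({α, α, α} : Multiset V) = 3 := by
    simp [Multiset.insert_eq_cons, Multiset.count_cons]
  -- zero counts
  have Z1 : ∀ W : Multiset (Option V), 2 ≤ W.count none →
      (univ.filter (fun e => edgeVerts ψ' φ e = W)).card = 0 := by
    intro W hW
    rw [Finset.card_eq_zero]
    refine Finset.filter_eq_empty_iff.mpr (fun e _ => ?_)
    intro hE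
    have := I3 e
    rw [hE] at this
    omega
  have Z1c : ∀ (W : Multiset (Option V)) (j : Fin k), 2 ≤ W.count none →
      (univ.filter (fun e => K e = j ∧ edgeVerts ψ' φ e = W)).card = 0 := by
    intro W j hW
    rw [Finset.card_eq_zero]
    refine Finset.filter_eq_empty_iff.mpr (fun e _ => ?_)
    rintro ⟨-, hE⟩
    have := I3 e
    rw [hE] at this
    omega
  have hcnt2 : ∀ x : Option V, x ≠ none → Multiset.count none ({none, none, x} : Multiset (Option V)) = 2 := by
    intro x hx
    simp [Multiset.insert_eq_cons, Multiset.count_cons, Ne.symm hx]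
  have hcnt3 : Multiset.count none ({none, none, none} : Multiset (Option V)) = 3 := by
    simp [Multiset.insert_eq_cons, Multiset.count_cons]
  -- definitional unfoldings
  have mFeq' : ∀ x y z : Option V, mF ψ' φ x y z
      = (univ.filter (fun e => edgeVerts ψ' φ e = ({x, y, z} : Multiset (Option V)))).card :=
    fun _ _ _ => rfl
  have mFeq : ∀ x y z : V, mF ψ φ x y z
      = (univ.filter (fun e => edgeVerts ψ φ e = ({x, y, z} : Multiset V))).card :=
    fun _ _ _ => rfl
  have mFceq' : ∀ (j : Fin k) (x y z : Option V), mFc ψ' φ K j x y z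
      = (univ.filter (fun e => K e = j ∧ edgeVerts ψ' φ e = ({x, y, z} : Multiset (Option V)))).card :=
    fun _ _ _ _ => rfl
  have mFceq : ∀ (j : Fin k) (x y z : V), mFc ψ φ K j x y z
      = (univ.filter (fun e => K e = j ∧ edgeVerts ψ φ e = ({x, y, z} : Multiset V))).card :=
    fun _ _ _ _ => rfl
  refine ⟨ψ', P2, ?_, ?_, ?_, ?_, ?_, ?_, ?_, ?_, ?_, ?_, ?_, ?_, ?_⟩
  · -- B1
    rw [D3]
    refine approx_congr (approx_compl Rle3 R3) ?_
    field_simp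
  · -- B2
    rw [D1]
    exact R3
  · -- B3
    intro w hw
    rw [mFeq', ← hmap3 α w w, U1 ({α, w, w} : Multiset V)]
    refine approx_congr (approx_compl (Rle1 _) (R1 _)) ?_
    rw [mFeq, hc1 w w hw hw]
    push_cast
    rw [eq_div_iff hgne, sub_mul, div_mul_cancel₀ _ hgne]
    ring
  · -- B4
    intro w hw
    rw [mFeq', ← hmap2 w w, U2 ({w, w} : Multiset V), hconsmk w w]
    refine approx_congr (R1 _) ?_
    rw [mFeq, hc1 w w hw hw]
    push_cast
    ring
  · -- B5
    intro u w hu hw huw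
    rw [mFeq', ← hmap3 α u w, U1 ({α, u, w} : Multiset V)]
    refine approx_congr (approx_compl (Rle1 _) (R1 _)) ?_
    rw [mFeq, hc1 u w hu hw]
    push_cast
    rw [eq_div_iff hgne, sub_mul, div_mul_cancel₀ _ hgne]
    ring
  · -- B6
    intro u w hu hw huw
    rw [mFeq', ← hmap2 u w, U2 ({u, w} : Multiset V), hconsmk u w]
    refine approx_congr (R1 _) ?_
    rw [mFeq, hc1 u w hu hw]
    push_cast
    ring
  · -- B7
    intro w hw
    rw [mFeq']
    exact Z1 _ (by rw [hcnt2 (some w) (by simp)])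
  · -- B8
    intro w hw
    rw [mFeq', ← hmap2' α w, U2 ({α, w} : Multiset V), hconsmk α w]
    refine approx_congr (R1 _) ?_
    rw [mFeq, hc2 w hw]
    push_cast
    ring
  · -- B9
    intro w hw
    rw [mFeq', ← hmap3 α α w, U1 ({α, α, w} : Multiset V)]
    refine approx_congr (approx_compl (Rle1 _) (R1 _)) ?_
    rw [mFeq, hc2 w hw]
    push_cast
    rw [eq_div_iff hgne, sub_mul, div_mul_cancel₀ _ hgne]
    ring
  · -- B10
    constructor
    · rw [mFeq']
      exact Z1 _ (by rw [hcnt3]; omega)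
    · rw [mFeq']
      exact Z1 _ (by rw [hcnt2 (some α) (by simp)])
  · -- B11
    rw [mFeq', ← hmap3 α α α, U1 ({α, α, α} : Multiset V)]
    refine approx_congr (approx_compl (Rle1 _) (R1 _)) ?_
    rw [mFeq, hc3]
    push_cast
    rw [eq_div_iff hgne, sub_mul, div_mul_cancel₀ _ hgne]
    ring
  · -- B12
    rw [mFeq', ← hmap2 α α, U2 ({α, α} : Multiset V), hconsmk α α]
    refine approx_congr (R1 _) ?_
    rw [mFeq, hc3]
    push_cast
    ring
  · -- colored analogues
    intro j
    refine ⟨?_, ?_, ?_, ?_, ?_, ?_, ?_, ?_, ?_, ?_, ?_, ?_⟩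
    · rw [D4 j]
      refine approx_congr (approx_compl (Rle4 j) (R4 j)) ?_
      rw [eq_div_iff hgne, sub_mul, div_mul_cancel₀ _ hgne]
      ring
    · rw [D2 j]
      exact R4 j
    · intro w hw
      rw [mFceq', ← hmap3 α w w, U1c ({α, w, w} : Multiset V) j]
      refine approx_congr (approx_compl (Rle2 _ j) (R2 _ j)) ?_
      rw [mFceq, hc1 w w hw hw]
      push_cast
      rw [eq_div_iff hgne, sub_mul, div_mul_cancel₀ _ hgne]
      ring
    · intro w hw
      rw [mFceq', ← hmap2 w w, U2c ({w, w} : Multiset V) j, hconsmk w w]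
      refine approx_congr (R2 _ j) ?_
      rw [mFceq, hc1 w w hw hw]
      push_cast
      ring
    · intro u w hu hw huw
      rw [mFceq', ← hmap3 α u w, U1c ({α, u, w} : Multiset V) j]
      refine approx_congr (approx_compl (Rle2 _ j) (R2 _ j)) ?_
      rw [mFceq, hc1 u w hu hw]
      push_cast
      rw [eq_div_iff hgne, sub_mul, div_mul_cancel₀ _ hgne]
      ring
    · intro u w hu hw huw
      rw [mFceq', ← hmap2 u w, U2c ({u, w} : Multiset V) j, hconsmk u w]
      refine approx_congr (R2 _ j) ?_
      rw [mFceq, hc1 u w hu hw]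
      push_cast
      ring
    · intro w hw
      rw [mFceq']
      exact Z1c _ j (by rw [hcnt2 (some w) (by simp)])
    · intro w hw
      rw [mFceq', ← hmap2' α w, U2c ({α, w} : Multiset V) j, hconsmk α w]
      refine approx_congr (R2 _ j) ?_
      rw [mFceq, hc2 w hw]
      push_cast
      ring
    · intro w hw
      rw [mFceq', ← hmap3 α α w, U1c ({α, α, w} : Multiset V) j]
      refine approx_congr (approx_compl (Rle2 _ j) (R2 _ j)) ?_
      rw [mFceq, hc2 w hw]
      push_cast
      rw [eq_div_iff hgne, sub_mul, div_mul_cancel₀ _ hgne]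
      ring
    · constructor
      · rw [mFceq']
        exact Z1c _ j (by rw [hcnt3]; omega)
      · rw [mFceq']
        exact Z1c _ j (by rw [hcnt2 (some α) (by simp)])
    · rw [mFceq', ← hmap3 α α α, U1c ({α, α, α} : Multiset V) j]
      refine approx_congr (approx_compl (Rle2 _ j) (R2 _ j)) ?_
      rw [mFceq, hc3]
      push_cast
      rw [eq_div_iff hgne, sub_mul, div_mul_cancel₀ _ hgne]
      ring
    · rw [mFceq', ← hmap2 α α, U2c ({α, α} : Multiset V) j, hconsmk α α]
      refine approx_congr (R2 _ j) ?_
      rw [mFceq, hc3]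
      push_cast
      ring
end MR0
end
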